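/- arXiv:1101.2705 — 4 statements merged into one kernel-verified Lean document; each statement's English description precedes it below -/
import Mathlib

section
/- For a connected rooted dag G with at least two nodes and pebbling cost p, and any k ≥ 2, every deterministic thrifty k-way branching program solving the Dag Evaluation Problem DE^G_k has at least k^p states. -/
/-- A deterministic `k`-way branching program with variables `Var` and outputs `Out`.
States are either query states (labeled by `query`, with `k` out-edges given by `next`)
or output states (where `out` is `some o`). -/
structure BP (Var : Type) (k : ℕ) (Out : Type) where
  State : Type
  [finState : Fintype State]
  start : State
  query : State → Var
  next : State → Fin k → State
  out : State → Option Out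

namespace BP

variable {Var Out : Type} {k : ℕ}

/-- The number of states. -/
noncomputable def size (B : BP Var k Out) : ℕ := @Fintype.card B.State B.finState

/-- The computation path of input `I`. -/
def path (B : BP Var k Out) (I : Var → Fin k) : ℕ → B.State
  | 0 => B.start
  | t + 1 => B.next (B.path I t) (I (B.query (B.path I t)))

/-- The computation of `I` is still running at time `t`: no output state was reached earlier. -/
def VisitsAt (B : BP Var k Out) (I : Var → Fin k) (t : ℕ) : Prop :=
  ∀ s < t, B.out (B.path I s) = none

/-- State `q` is on the computation path of input `I`. -/
def Visits (B : BP Var k Out) (I : Var → Fin k) (q : B.State) : Prop :=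
  ∃ t, B.VisitsAt I t ∧ B.path I t = q

/-- `B` computes the function `g`. -/
def Computes (B : BP Var k Out) (g : (Var → Fin k) → Out) : Prop :=
  ∀ I, ∃ t, B.VisitsAt I t ∧ B.out (B.path I t) = some (g I)

end BP
/-- A single black-pebbling move with respect to a child relation: either place a pebble on a
node all of whose children are pebbled, simultaneously removing the pebbles from some set `S`
of its children, or remove a pebble from some node. -/
def PebMove {α : Type} [DecidableEq α] (child : α → α → Prop) (C C' : Finset α) : Prop :=
  (∃ (u : α) (S : Finset α), (∀ v, child v u → v ∈ C) ∧ (∀ v ∈ S, child v u) ∧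
      C' = insert u (C \ S)) ∨
  (∃ u : α, C' = C.erase u)

/-- `f 0, …, f T` is a complete black pebbling sequence: it starts with no pebbles, ends with the
root pebbled, and each step is a valid move (or leaves the configuration unchanged). -/
def IsCompletePebbling {α : Type} [DecidableEq α] (child : α → α → Prop) (root : α)
    (f : ℕ → Finset α) (T : ℕ) : Prop :=
  f 0 = ∅ ∧ root ∈ f T ∧ ∀ t < T, PebMove child (f t) (f (t + 1)) ∨ f (t + 1) = f t

/-- The black pebbling cost: the least `p` such that some complete pebbling sequence never has
more than `p` pebbles on the dag simultaneously. -/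
noncomputable def pebCost (α : Type) [DecidableEq α] (child : α → α → Prop) (root : α) : ℕ :=
  sInf {p | ∃ f T, IsCompletePebbling child root f T ∧ ∀ t ≤ T, (f t).card ≤ p}
/-- A connected rooted dag: nodes `Fin n`, with `child v u` meaning there is an arc from `v`
to `u` (so `v` is a child of `u`).  The relation is well-founded (the dag is acyclic), the
root is the unique node of out-degree `0` (every other node has a parent, which also makes
the dag connected). -/
structure RootedDag where
  n : ℕ
  child : Fin n → Fin n → Prop
  wf : WellFounded child
  root : Fin n
  root_no_parent : ∀ u, ¬ child root u
  root_unique : ∀ u, u ≠ root → ∃ w, child u w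

namespace RootedDag

/-- A leaf is a node of in-degree `0`. -/
def IsLeaf (G : RootedDag) (u : Fin G.n) : Prop := ∀ v, ¬ G.child v u

/-- The input variables of the dag evaluation problem `DE^G_k`: a leaf variable `l_u` for each
leaf `u`, and a variable `f_u(a⃗)` for each internal node `u` and each assignment `a⃗` of values
in `[k]` to the children of `u`. -/
def Var (G : RootedDag) (k : ℕ) : Type :=
  {u : Fin G.n // G.IsLeaf u} ⊕
    (Σ _u : {u : Fin G.n // ¬ G.IsLeaf u}, ({v : Fin G.n // G.child v _u.1} → Fin k))

/-- The value of each node of `G` under input `I`: leaves take their `l` value, and an internal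
node applies its function to the values of its children. -/
noncomputable def val (G : RootedDag) {k : ℕ} (I : G.Var k → Fin k) : Fin G.n → Fin k :=
  WellFounded.fix (C := fun _ => Fin k) G.wf fun u ih =>
    letI := Classical.dec (G.IsLeaf u)
    if h : G.IsLeaf u then I (Sum.inl ⟨u, h⟩)
    else I (Sum.inr ⟨⟨u, h⟩, fun v => ih v.1 v.2⟩)

/-- `B` solves `DE^G_k`: on every input it halts with output `true` iff the value of the
root is `1` (the first element of `[k]`). -/
def SolvesDE (G : RootedDag) {k : ℕ} (hk : 0 < k) (B : BP (G.Var k) k Bool) : Prop :=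
  B.Computes fun I => decide (G.val I G.root = ⟨0, hk⟩)

/-- `B` is thrifty: whenever a state querying `f_u(a⃗)` is visited by input `I`, then `a⃗` is
exactly the tuple of values of the children of `u` under `I`. -/
def Thrifty (G : RootedDag) {k : ℕ} (B : BP (G.Var k) k Bool) : Prop :=
  ∀ (I : G.Var k → Fin k) (q : B.State) (u : {u : Fin G.n // ¬ G.IsLeaf u})
    (a : {v : Fin G.n // G.child v u.1} → Fin k),
    B.Visits I q → B.query q = Sum.inr ⟨u, a⟩ → ∀ v, a v = G.val I v.1

end RootedDag

namespace ThriftyPf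
open Relation

variable {G : RootedDag} {k : ℕ}

noncomputable instance instDecVar : DecidableEq (G.Var k) := Classical.decEq _

/-- The node a variable belongs to. -/
def nodeOf : G.Var k → Fin G.n
  | Sum.inl u => u.1
  | Sum.inr s => s.1.1

/-- The "correct" variable of node `u` under input `I`. -/
noncomputable def cvar (I : G.Var k → Fin k) (u : Fin G.n) : G.Var k :=
  letI := Classical.dec (G.IsLeaf u)
  if h : G.IsLeaf u then Sum.inl ⟨u, h⟩
  else Sum.inr ⟨⟨u, h⟩, fun v => G.val I v.1⟩

theorem cvar_pos (I : G.Var k → Fin k) {u : Fin G.n} (h : G.IsLeaf u) :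
    cvar I u = Sum.inl ⟨u, h⟩ := dif_pos h

theorem cvar_neg (I : G.Var k → Fin k) {u : Fin G.n} (h : ¬ G.IsLeaf u) :
    cvar I u = Sum.inr ⟨⟨u, h⟩, fun v => G.val I v.1⟩ := dif_neg h

theorem val_eq (I : G.Var k → Fin k) (u : Fin G.n) :
    G.val I u = (letI := Classical.dec (G.IsLeaf u);
      if h : G.IsLeaf u then I (Sum.inl ⟨u, h⟩)
      else I (Sum.inr ⟨⟨u, h⟩, fun v => G.val I v.1⟩)) := by
  rw [RootedDag.val, WellFounded.fix_eq]

theorem I_cvar (I : G.Var k → Fin k) (u : Fin G.n) : I (cvar I u) = G.val I u := by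
  rw [val_eq]
  split
  · rw [cvar_pos I ‹_›]
  · rw [cvar_neg I ‹_›]

theorem nodeOf_cvar (I : G.Var k → Fin k) (u : Fin G.n) : nodeOf (cvar I u) = u := by
  by_cases h : G.IsLeaf u
  · rw [cvar_pos I h]; rfl
  · rw [cvar_neg I h]; rfl

theorem cvar_inj {I I' : G.Var k → Fin k} {u v : Fin G.n} (h : cvar I u = cvar I' v) :
    u = v := by
  have h2 := congrArg nodeOf h
  rwa [nodeOf_cvar, nodeOf_cvar] at h2

theorem not_transGen_self (v : Fin G.n) : ¬ TransGen G.child v v :=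
  (G.wf.transGen).induction (C := fun x => ¬ TransGen G.child x x) v
    (fun x ih hx => ih x hx hx)

theorem wf_flip : WellFounded (fun w v : Fin G.n => G.child v w) := by
  have h1 : WellFounded (TransGen (fun w v : Fin G.n => G.child v w)) := by
    letI : IsIrrefl (Fin G.n) (TransGen (fun w v : Fin G.n => G.child v w)) := by
      constructor
      intro a ha
      exact not_transGen_self a ((Relation.transGen_swap).1 ha)
    exact Finite.wellFounded_of_trans_of_irrefl _
  exact Subrelation.wf (q := fun w v : Fin G.n => G.child v w)
    (r := TransGen (fun w v : Fin G.n => G.child v w)) (fun h => TransGen.single h) h1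

theorem root_reach (u : Fin G.n) : ReflTransGen G.child u G.root :=
  (wf_flip (G := G)).induction (C := fun x => ReflTransGen G.child x G.root) u
    (fun x ih => by
      by_cases hx : x = G.root
      · subst hx; exact ReflTransGen.refl
      · obtain ⟨w, hw⟩ := G.root_unique x hx
        exact ReflTransGen.head hw (ih w hw))

theorem root_has_child (hn : 2 ≤ G.n) : ∃ c, G.child c G.root := by
  have h2 : ∃ u : Fin G.n, u ≠ G.root := by
    by_cases h0 : (⟨0, by omega⟩ : Fin G.n) = G.root
    · exact ⟨⟨1, by omega⟩, by rw [← h0]; intro h; simpa using congrArg Fin.val h⟩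
    · exact ⟨⟨0, by omega⟩, h0⟩
  obtain ⟨u, hu⟩ := h2
  rcases (root_reach u).cases_tail with h | ⟨c, _, hc⟩
  · exact absurd h.symm hu
  · exact ⟨c, hc⟩

theorem root_not_leaf (hn : 2 ≤ G.n) : ¬ G.IsLeaf G.root := by
  obtain ⟨c, hc⟩ := root_has_child hn
  exact fun h => h c hc

theorem val_congr {I I' : G.Var k → Fin k} :
    ∀ u : Fin G.n, (∀ x : G.Var k, ReflTransGen G.child (nodeOf x) u → I x = I' x) →
      G.val I u = G.val I' u := by
  intro u
  induction u using G.wf.induction with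
  | _ u ih =>
    intro hagree
    rw [val_eq, val_eq]
    split
    · exact hagree _ ReflTransGen.refl
    · have htup : (fun v : {v : Fin G.n // G.child v u} => G.val I v.1) =
          (fun v : {v : Fin G.n // G.child v u} => G.val I' v.1) := by
        funext c
        exact ih c.1 c.2 (fun x hx => hagree x (hx.trans (ReflTransGen.single c.2)))
      rw [htup]
      exact hagree _ ReflTransGen.refl

theorem cvar_congr {I I' : G.Var k → Fin k} {u : Fin G.n}
    (h : ∀ x : G.Var k, TransGen G.child (nodeOf x) u → I x = I' x) :
    cvar I u = cvar I' u := by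
  by_cases hl : G.IsLeaf u
  · rw [cvar_pos I hl, cvar_pos I' hl]
  · rw [cvar_neg I hl, cvar_neg I' hl]
    congr 1
    refine Sigma.ext rfl ?_
    simp only [heq_eq_eq]
    funext c
    exact val_congr c.1 (fun x hx => h x (TransGen.tail' hx c.2))

theorem update_below {I : G.Var k → Fin k} {u : Fin G.n} {c' : Fin k} :
    ∀ x : G.Var k, TransGen G.child (nodeOf x) u →
      I x = Function.update I (cvar I u) c' x := by
  intro x hx
  have hne : x ≠ cvar I u := by
    intro hxe
    subst hxe
    rw [nodeOf_cvar] at hx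
    exact not_transGen_self u hx
  exact (Function.update_of_ne hne c' I).symm

theorem val_update (I : G.Var k → Fin k) (u : Fin G.n) (c' : Fin k) :
    G.val (Function.update I (cvar I u) c') u = c' := by
  have hcv : cvar (Function.update I (cvar I u) c') u = cvar I u :=
    cvar_congr (fun x hx => (update_below x hx).symm)
  rw [← I_cvar (Function.update I (cvar I u) c') u, hcv, Function.update_self]

theorem exists_ne_fin (hk : 2 ≤ k) (a : Fin k) : ∃ b : Fin k, b ≠ a := by
  by_cases h0 : a = ⟨0, by omega⟩
  · exact ⟨⟨1, by omega⟩, by rw [h0]; intro h; simpa using congrArg Fin.val h⟩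
  · exact ⟨⟨0, by omega⟩, fun h => h0 h.symm⟩

end ThriftyPf
namespace ThriftyPf
open Relation

section Comp

variable {G : RootedDag} {k : ℕ} {B : BP (G.Var k) k Bool} {hkp : 0 < k}

theorem path_congr {I I' : G.Var k → Fin k} {t : ℕ}
    (h : ∀ s, s < t → I' (B.query (B.path I s)) = I (B.query (B.path I s))) :
    ∀ s, s ≤ t → B.path I' s = B.path I s := by
  intro s
  induction s with
  | zero => intro _; rfl
  | succ s ih =>
    intro hs
    have h1 : B.path I' s = B.path I s := ih (by omega)
    show B.next (B.path I' s) (I' (B.query (B.path I' s))) = _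
    rw [h1, h (s) (by omega)]
    rfl

variable (hsolve : G.SolvesDE hkp B)
include hsolve

/-- The output value the BP must produce. -/
noncomputable def gval (I : G.Var k → Fin k) : Bool :=
  decide (G.val I G.root = ⟨0, hkp⟩)

theorem halts (I : G.Var k → Fin k) : ∃ t, (B.out (B.path I t)).isSome := by
  obtain ⟨t, _, ho⟩ := hsolve I
  exact ⟨t, by rw [ho]; rfl⟩

/-- The halting time: first time the path reaches an output state. -/
noncomputable def T (I : G.Var k → Fin k) : ℕ := Nat.find (halts hsolve I)

theorem out_lt (I : G.Var k → Fin k) {s : ℕ} (hs : s < T hsolve I) :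
    B.out (B.path I s) = none := by
  have := Nat.find_min (halts hsolve I) hs
  simp only [Option.isSome] at this
  revert this
  match B.out (B.path I s) with
  | none => intro _; rfl
  | some b => intro h; exact absurd rfl h

theorem visitsAt (I : G.Var k → Fin k) {s : ℕ} (hs : s ≤ T hsolve I) :
    B.VisitsAt I s := fun s' hs' => out_lt hsolve I (by omega)

theorem visits (I : G.Var k → Fin k) {s : ℕ} (hs : s ≤ T hsolve I) :
    B.Visits I (B.path I s) := ⟨s, visitsAt hsolve I hs, rfl⟩

theorem out_T (I : G.Var k → Fin k) :
    B.out (B.path I (T hsolve I)) = some (gval (hkp := hkp) I) := by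
  obtain ⟨t, hv, ho⟩ := hsolve I
  have h1 : T hsolve I ≤ t := Nat.find_min' _ (by rw [ho]; rfl)
  have h2 : t = T hsolve I := by
    rcases Nat.lt_or_ge (T hsolve I) t with h | h
    · exact absurd (hv _ h) (by
        have hT : (B.out (B.path I (T hsolve I))).isSome = true :=
          Nat.find_spec (halts hsolve I)
        intro hnone
        rw [hnone] at hT
        simp at hT)
    · omega
  rw [← h2, ho]
  rfl

theorem T_congr {I I' : G.Var k → Fin k}
    (h : ∀ s, s ≤ T hsolve I → B.path I' s = B.path I s) :
    T hsolve I' = T hsolve I ∧ gval (hkp := hkp) I' = gval (hkp := hkp) I := by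
  have h1 : T hsolve I' ≤ T hsolve I := Nat.find_min' _ (by
    rw [h _ le_rfl]
    have := Nat.find_spec (halts hsolve I)
    exact this)
  have h2 : ¬ T hsolve I' < T hsolve I := by
    intro hlt
    have := out_T hsolve I'
    rw [h _ (le_of_lt hlt)] at this
    rw [out_lt hsolve I hlt] at this
    exact absurd this (by simp)
  have hT : T hsolve I' = T hsolve I := by omega
  constructor
  · exact hT
  · have := out_T hsolve I'
    rw [hT, h _ le_rfl, out_T hsolve I] at this
    exact (Option.some_inj.mp this).symm

variable (hthrifty : G.Thrifty B)
include hthrifty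
set_option linter.unusedSectionVars false

theorem query_cvar (I : G.Var k → Fin k) {s : ℕ} (hs : s < T hsolve I) :
    B.query (B.path I s) = cvar I (nodeOf (B.query (B.path I s))) := by
  rcases hq : B.query (B.path I s) with ⟨u, hu⟩ | ⟨⟨u, hu⟩, a⟩
  · show _ = cvar I u
    rw [cvar_pos I hu]
  · show _ = cvar I u
    have ha := hthrifty I (B.path I s) ⟨u, hu⟩ a (visits hsolve I (le_of_lt hs)) hq
    rw [cvar_neg I hu]
    congr 1
    refine Sigma.ext rfl ?_
    simp only [heq_eq_eq]
    funext v
    exact ha v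

/-- `s` is a (live) query time of (the correct variable of) node `v` under `I`. -/
def qtime (I : G.Var k → Fin k) (v : Fin G.n) (s : ℕ) : Prop :=
  s < T hsolve I ∧ B.query (B.path I s) = cvar I v

theorem qtime_unique {I : G.Var k → Fin k} {v w : Fin G.n} {s : ℕ}
    (h1 : qtime hsolve I v s) (h2 : qtime hsolve I w s) : v = w :=
  cvar_inj (h1.2.symm.trans h2.2)

/-- Lemma A: if an internal node is queried at a live time `t`, each of its children
was queried before `t`. -/
theorem child_queried (hk : 2 ≤ k) {I : G.Var k → Fin k} {w : Fin G.n} {t : ℕ}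
    (ht : qtime hsolve I w t) {c : Fin G.n} (hcw : G.child c w) :
    ∃ s, s < t ∧ qtime hsolve I c s := by
  by_contra hcon
  push_neg at hcon
  have hnq : ∀ s, s < t → B.query (B.path I s) ≠ cvar I c := by
    intro s hst hq
    have h1 := ht.1
    exact hcon s hst ⟨by omega, hq⟩
  obtain ⟨c', hc'⟩ := exists_ne_fin hk (G.val I c)
  set I' := Function.update I (cvar I c) c' with hI'def
  have hpath : ∀ s, s ≤ t → B.path I' s = B.path I s := by
    refine path_congr ?_
    intro s hst
    rw [hI'def, Function.update_of_ne (hnq s hst)]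
  have hvis : B.Visits I' (B.path I t) := by
    refine ⟨t, ?_, hpath t le_rfl⟩
    intro s' hs'
    rw [hpath s' (le_of_lt hs')]
    have h1 := ht.1
    exact out_lt hsolve I (by omega)
  have hwl : ¬ G.IsLeaf w := fun h => h c hcw
  have hq2 : B.query (B.path I t) =
      Sum.inr ⟨⟨w, hwl⟩, fun v : {v : Fin G.n // G.child v w} => G.val I v.1⟩ := by
    rw [ht.2, cvar_neg I hwl]
  have ha := hthrifty I' (B.path I t) ⟨w, hwl⟩ _ hvis hq2 ⟨c, hcw⟩
  simp only at ha
  rw [val_update] at ha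
  exact hc' ha.symm

/-- Lemma B: the root's correct variable is queried. -/
theorem root_queried (hn : 2 ≤ G.n) (hk : 2 ≤ k) (I : G.Var k → Fin k) :
    ∃ s, qtime hsolve I G.root s := by
  by_contra hcon
  push_neg at hcon
  have hnq : ∀ s, s < T hsolve I → B.query (B.path I s) ≠ cvar I G.root := by
    intro s hst hq
    exact hcon s ⟨hst, hq⟩
  have hb : ∃ b : Fin k, ((G.val I G.root = ⟨0, hkp⟩) ↔ ¬ (b = ⟨0, hkp⟩)) := by
    by_cases hx : G.val I G.root = ⟨0, hkp⟩
    · refine ⟨⟨1, by omega⟩, fun _ h1 => ?_, fun _ => hx⟩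
      exact absurd (congrArg Fin.val h1) (by simp)
    · exact ⟨⟨0, hkp⟩, by simp [hx]⟩
  obtain ⟨b, hb⟩ := hb
  set I' := Function.update I (cvar I G.root) b with hI'def
  have hpath : ∀ s, s ≤ T hsolve I → B.path I' s = B.path I s := by
    refine path_congr ?_
    intro s hst
    rw [hI'def, Function.update_of_ne (hnq s hst)]
  have hval : G.val I' G.root = b := val_update I G.root b
  have hg := (T_congr hsolve hpath).2
  rw [gval, gval, hval] at hg
  simp only [decide_eq_decide] at hg
  by_cases hx : G.val I G.root = ⟨0, hkp⟩
  · exact (hb.1 hx) (hg.2 hx)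
  · have hbz : b = ⟨0, hkp⟩ := by
      by_contra hbz
      exact hx (hb.2 hbz)
    exact hx (hg.1 hbz)

/-- Every node's correct variable is queried at a live time. -/
theorem exists_qtime (hn : 2 ≤ G.n) (hk : 2 ≤ k) (I : G.Var k → Fin k) (v : Fin G.n) :
    ∃ s, qtime hsolve I v s := by
  induction v using (wf_flip (G := G)).induction with
  | _ v ih =>
    by_cases hv : v = G.root
    · subst hv; exact root_queried hsolve hthrifty hn hk I
    · obtain ⟨w, hw⟩ := G.root_unique v hv
      obtain ⟨t, ht⟩ := ih w hw
      obtain ⟨s, _, hs⟩ := child_queried hsolve hthrifty hk ht hw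
      exact ⟨s, hs⟩

end Comp
end ThriftyPf
namespace ThriftyPf
open Relation

variable {G : RootedDag} {k : ℕ} {B : BP (G.Var k) k Bool} {hkp : 0 < k}

noncomputable instance qtimeDec (hsolve : G.SolvesDE hkp B) (I : G.Var k → Fin k)
    (v : Fin G.n) (s : ℕ) : Decidable (qtime hsolve I v s) := Classical.dec _

noncomputable instance qtimeDecP (hsolve : G.SolvesDE hkp B) (I : G.Var k → Fin k)
    (v : Fin G.n) : DecidablePred (qtime hsolve I v) := fun _ => Classical.dec _

noncomputable instance qtimeDecP2 (hsolve : G.SolvesDE hkp B) (I : G.Var k → Fin k)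
    (v : Fin G.n) (t : ℕ) : DecidablePred (fun s => qtime hsolve I v s ∧ s < t) :=
  fun _ => Classical.dec _

/-- Last live query time of node `v`'s correct variable. -/
noncomputable def ltq (hsolve : G.SolvesDE hkp B) (I : G.Var k → Fin k) (v : Fin G.n) : ℕ :=
  @Nat.findGreatest (qtime hsolve I v) (qtimeDecP hsolve I v) (T hsolve I)

/-- Last query time of node `v`'s correct variable strictly before `t`. -/
noncomputable def lb (hsolve : G.SolvesDE hkp B) (I : G.Var k → Fin k) (v : Fin G.n)
    (t : ℕ) : ℕ :=
  @Nat.findGreatest (fun s => qtime hsolve I v s ∧ s < t) (qtimeDecP2 hsolve I v t) t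

section LtLb

variable (hsolve : G.SolvesDE hkp B) {I : G.Var k → Fin k} {v : Fin G.n}

theorem ltq_mem (hex : ∃ s, qtime hsolve I v s) : qtime hsolve I v (ltq hsolve I v) := by
  obtain ⟨s, hs⟩ := hex
  unfold ltq
  exact Nat.findGreatest_spec (P := qtime hsolve I v) (m := s) (n := T hsolve I)
    (le_of_lt hs.1) hs

theorem le_ltq {s : ℕ} (hs : qtime hsolve I v s) : s ≤ ltq hsolve I v := by
  unfold ltq
  exact Nat.le_findGreatest (P := qtime hsolve I v) (n := T hsolve I)
    (le_of_lt hs.1) hs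

theorem lb_mem {t : ℕ} (hex : ∃ s, qtime hsolve I v s ∧ s < t) :
    qtime hsolve I v (lb hsolve I v t) ∧ lb hsolve I v t < t := by
  obtain ⟨s, hs⟩ := hex
  unfold lb
  exact Nat.findGreatest_spec (P := fun s => qtime hsolve I v s ∧ s < t) (m := s) (n := t)
    (le_of_lt hs.2) hs

theorem le_lb {s t : ℕ} (hs : qtime hsolve I v s) (hst : s < t) : s ≤ lb hsolve I v t := by
  unfold lb
  exact Nat.le_findGreatest (P := fun s => qtime hsolve I v s ∧ s < t) (n := t)
    (le_of_lt hst) ⟨hs, hst⟩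

end LtLb

/-- Useful query times. -/
inductive Useful (hsolve : G.SolvesDE hkp B) (I : G.Var k → Fin k) : Fin G.n → ℕ → Prop
  | root : Useful hsolve I G.root (ltq hsolve I G.root)
  | step {w t v} : Useful hsolve I w t → G.child v w → Useful hsolve I v (lb hsolve I v t)

section UsefulLemmas

variable (hn : 2 ≤ G.n) (hk : 2 ≤ k)
variable (hsolve : G.SolvesDE hkp B) (hthrifty : G.Thrifty B) {I : G.Var k → Fin k}
include hn hk hsolve hthrifty
set_option linter.unusedSectionVars false

theorem useful_qtime {v : Fin G.n} {t : ℕ} (h : Useful hsolve I v t) :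
    qtime hsolve I v t := by
  induction h with
  | root => exact ltq_mem hsolve (root_queried hsolve hthrifty hn hk I)
  | @step w t v hw hcv ih =>
    obtain ⟨s, h1, h2⟩ := child_queried hsolve hthrifty hk ih hcv
    exact (lb_mem hsolve ⟨s, h2, h1⟩).1

theorem useful_le {v : Fin G.n} {t : ℕ} (h : Useful hsolve I v t) :
    t ≤ ltq hsolve I G.root := by
  induction h with
  | root => exact le_rfl
  | @step w t v hw hcv ih =>
    obtain ⟨s, hs1, hs2⟩ := child_queried hsolve hthrifty hk
      (useful_qtime hn hk hsolve hthrifty hw) hcv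
    have h1 : lb hsolve I v t < t := (lb_mem hsolve ⟨s, hs2, hs1⟩).2
    omega

theorem exists_useful (v : Fin G.n) : ∃ t, Useful hsolve I v t := by
  induction v using (wf_flip (G := G)).induction with
  | _ v ih =>
    by_cases hv : v = G.root
    · subst hv; exact ⟨_, Useful.root⟩
    · obtain ⟨w, hw⟩ := G.root_unique v hv
      obtain ⟨t, ht⟩ := ih w hw
      exact ⟨_, ht.step hw⟩

theorem useful_root_eq {t : ℕ} (h : Useful hsolve I G.root t) : t = ltq hsolve I G.root := by
  cases h with
  | root => rfl
  | step hw hcv => exact absurd hcv (G.root_no_parent _)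

theorem ltq_root_lt_T : ltq hsolve I G.root < T hsolve I :=
  (ltq_mem hsolve (root_queried hsolve hthrifty hn hk I)).1

end UsefulLemmas
end ThriftyPf
namespace ThriftyPf
open Relation

variable {G : RootedDag} {k : ℕ} {B : BP (G.Var k) k Bool} {hkp : 0 < k}

/-- Node `v` is pebbled at time `t`. -/
def inCfg (hsolve : G.SolvesDE hkp B) (I : G.Var k → Fin k) (t : ℕ) (v : Fin G.n) : Prop :=
  (v = G.root ∧ ltq hsolve I G.root < t) ∨
  (∃ w t', G.child v w ∧ Useful hsolve I w t' ∧ t ≤ t' ∧ lb hsolve I v t' < t)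

noncomputable instance inCfgDec (hsolve : G.SolvesDE hkp B) (I : G.Var k → Fin k) (t : ℕ) :
    DecidablePred (inCfg hsolve I t) := fun _ => Classical.dec _

noncomputable def Cfg (hsolve : G.SolvesDE hkp B) (I : G.Var k → Fin k) (t : ℕ) :
    Finset (Fin G.n) :=
  Finset.univ.filter (inCfg hsolve I t)

theorem mem_Cfg {hsolve : G.SolvesDE hkp B} {I : G.Var k → Fin k} {t : ℕ} {v : Fin G.n} :
    v ∈ Cfg hsolve I t ↔ inCfg hsolve I t v := by
  rw [Cfg, Finset.mem_filter]
  simp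

section Pebbling

variable (hn : 2 ≤ G.n) (hk : 2 ≤ k)
variable (hsolve : G.SolvesDE hkp B) (hthrifty : G.Thrifty B) {I : G.Var k → Fin k}
include hn hk hsolve hthrifty
set_option linter.unusedSectionVars false

theorem Cfg_zero : Cfg hsolve I 0 = ∅ := by
  ext v
  rw [mem_Cfg]
  simp only [Finset.notMem_empty, iff_false]
  rintro (⟨_, h⟩ | ⟨w, t', _, _, _, h⟩) <;> omega

theorem root_mem_Cfg {t : ℕ} :
    G.root ∈ Cfg hsolve I t ↔ ltq hsolve I G.root < t := by
  rw [mem_Cfg]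
  constructor
  · rintro (⟨_, h⟩ | ⟨w, t', hcw, _, _, _⟩)
    · exact h
    · exact absurd hcw (G.root_no_parent w)
  · intro h
    exact Or.inl ⟨rfl, h⟩

theorem children_in {x : Fin G.n} {t : ℕ} (hx : Useful hsolve I x t) {c : Fin G.n}
    (hc : G.child c x) : c ∈ Cfg hsolve I t := by
  rw [mem_Cfg]
  obtain ⟨s, hs1, hs2⟩ := child_queried hsolve hthrifty hk
    (useful_qtime hn hk hsolve hthrifty hx) hc
  exact Or.inr ⟨x, t, hc, hx, le_rfl, (lb_mem hsolve ⟨s, hs2, hs1⟩).2⟩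

theorem x_in_next {x : Fin G.n} {t : ℕ} (hx : Useful hsolve I x t) :
    x ∈ Cfg hsolve I (t + 1) := by
  rw [mem_Cfg]
  cases hx with
  | root => exact Or.inl ⟨rfl, by omega⟩
  | @step w t'' _ hw hcv =>
    obtain ⟨s, hs1, hs2⟩ := child_queried hsolve hthrifty hk
      (useful_qtime hn hk hsolve hthrifty hw) hcv
    have hlt : lb hsolve I x t'' < t'' := (lb_mem hsolve ⟨s, hs2, hs1⟩).2
    exact Or.inr ⟨w, t'', hcv, hw, by omega, by omega⟩

theorem arrivals {v : Fin G.n} {t : ℕ} (hv : v ∈ Cfg hsolve I (t + 1)) :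
    v ∈ Cfg hsolve I t ∨ Useful hsolve I v t := by
  rw [mem_Cfg] at hv
  rcases hv with ⟨hroot, hlt⟩ | ⟨w, t', hcw, hw, ht1, ht2⟩
  · rcases Nat.lt_or_ge (ltq hsolve I G.root) t with h | h
    · exact Or.inl (by rw [mem_Cfg]; exact Or.inl ⟨hroot, h⟩)
    · have : ltq hsolve I G.root = t := by omega
      subst hroot
      exact Or.inr (this ▸ Useful.root)
  · rcases Nat.lt_or_ge (lb hsolve I v t') t with h | h
    · exact Or.inl (by rw [mem_Cfg]; exact Or.inr ⟨w, t', hcw, hw, by omega, h⟩)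
    · have hlb : lb hsolve I v t' = t := by omega
      exact Or.inr (hlb ▸ hw.step hcw)

theorem departures {v : Fin G.n} {t : ℕ} (hv : v ∈ Cfg hsolve I t)
    (hv' : v ∉ Cfg hsolve I (t + 1)) :
    ∃ w, G.child v w ∧ Useful hsolve I w t := by
  rw [mem_Cfg] at hv
  rcases hv with ⟨hroot, hlt⟩ | ⟨w, t', hcw, hw, ht1, ht2⟩
  · exact absurd (by rw [mem_Cfg]; exact Or.inl ⟨hroot, by omega⟩) hv'
  · rcases Nat.lt_or_ge t' (t + 1) with h | h
    · have : t' = t := by omega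
      subst this
      exact ⟨w, hcw, hw⟩
    · exact absurd (by rw [mem_Cfg]; exact Or.inr ⟨w, t', hcw, hw, h, by omega⟩) hv'

theorem cfg_step (t : ℕ) :
    PebMove G.child (Cfg hsolve I t) (Cfg hsolve I (t + 1)) ∨
      Cfg hsolve I (t + 1) = Cfg hsolve I t := by
  by_cases hex : ∃ x, Useful hsolve I x t
  · obtain ⟨x, hx⟩ := hex
    have hqx : qtime hsolve I x t := useful_qtime hn hk hsolve hthrifty hx
    refine Or.inl (Or.inl ⟨x, Cfg hsolve I t \ Cfg hsolve I (t + 1), ?_, ?_, ?_⟩)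
    · exact fun c hc => children_in hn hk hsolve hthrifty hx hc
    · intro v hv
      rw [Finset.mem_sdiff] at hv
      obtain ⟨w, hcw, hw⟩ := departures hn hk hsolve hthrifty hv.1 hv.2
      have : w = x := qtime_unique hsolve hthrifty (useful_qtime hn hk hsolve hthrifty hw) hqx
      exact this ▸ hcw
    · ext v
      rw [Finset.mem_insert, Finset.mem_sdiff, Finset.mem_sdiff]
      constructor
      · intro hv
        rcases arrivals hn hk hsolve hthrifty hv with h | h
        · exact Or.inr ⟨h, fun hs => hs.2 hv⟩
        · exact Or.inl (qtime_unique hsolve hthrifty (useful_qtime hn hk hsolve hthrifty h) hqx)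
      · rintro (rfl | ⟨h1, h2⟩)
        · exact x_in_next hn hk hsolve hthrifty hx
        · by_contra hcon
          exact h2 ⟨h1, hcon⟩
  · right
    ext v
    constructor
    · intro hv
      rcases arrivals hn hk hsolve hthrifty hv with h | h
      · exact h
      · exact absurd ⟨v, h⟩ hex
    · intro hv
      by_contra hcon
      obtain ⟨w, _, hw⟩ := departures hn hk hsolve hthrifty hv hcon
      exact hex ⟨w, hw⟩

theorem cfg_complete :
    IsCompletePebbling G.child G.root (Cfg hsolve I) (ltq hsolve I G.root + 1) := by
  refine ⟨Cfg_zero hn hk hsolve hthrifty, ?_, ?_⟩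
  · rw [root_mem_Cfg hn hk hsolve hthrifty]
    omega
  · intro t _
    exact cfg_step hn hk hsolve hthrifty t

theorem cfg_end_small : (Cfg hsolve I (ltq hsolve I G.root + 1)).card ≤ 1 := by
  have hsub : Cfg hsolve I (ltq hsolve I G.root + 1) ⊆ {G.root} := by
    intro v hv
    rw [mem_Cfg] at hv
    rcases hv with ⟨hroot, _⟩ | ⟨w, t', hcw, hw, ht1, _⟩
    · simp [hroot]
    · have := useful_le hn hk hsolve hthrifty hw
      omega
  calc (Cfg hsolve I (ltq hsolve I G.root + 1)).card ≤ ({G.root} : Finset (Fin G.n)).card :=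
        Finset.card_le_card hsub
    _ = 1 := Finset.card_singleton _

theorem exists_bottleneck {p : ℕ} (hp : pebCost (Fin G.n) G.child G.root = p) (hp1 : 1 ≤ p)
    (I : G.Var k → Fin k) :
    ∃ t, t ≤ ltq hsolve I G.root ∧ p ≤ (Cfg hsolve I t).card := by
  by_contra hcon
  push_neg at hcon
  rcases Nat.lt_or_ge p 2 with hp2 | hp2
  · -- p = 1
    have hp1' : p = 1 := by omega
    obtain ⟨c, hc⟩ := root_has_child hn
    have hcmem : c ∈ Cfg hsolve I (ltq hsolve I G.root) :=
      children_in hn hk hsolve hthrifty Useful.root hc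
    have hcard := hcon (ltq hsolve I G.root) le_rfl
    rw [hp1'] at hcard
    have : 0 < (Cfg hsolve I (ltq hsolve I G.root)).card := Finset.card_pos.2 ⟨c, hcmem⟩
    omega
  · -- p ≥ 2
    have hmem : p - 1 ∈ {q | ∃ f T, IsCompletePebbling G.child G.root f T ∧
        ∀ t ≤ T, (f t).card ≤ q} := by
      refine ⟨Cfg hsolve I, ltq hsolve I G.root + 1, cfg_complete hn hk hsolve hthrifty, ?_⟩
      intro t ht
      rcases Nat.lt_or_ge t (ltq hsolve I G.root + 1) with h | h
      · have := hcon t (by omega)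
        omega
      · have ht' : t = ltq hsolve I G.root + 1 := by omega
        rw [ht']
        have := cfg_end_small hn hk hsolve hthrifty (I := I)
        omega
    have hle : pebCost (Fin G.n) G.child G.root ≤ p - 1 := Nat.sInf_le hmem
    omega

end Pebbling
end ThriftyPf
namespace ThriftyPf
open Relation

variable {G : RootedDag} {k : ℕ} {B : BP (G.Var k) k Bool} {hkp : 0 < k}

noncomputable instance childDec : DecidableRel G.child := fun _ _ => Classical.dec _

instance varFinite : Finite (G.Var k) := by
  unfold RootedDag.Var
  infer_instance

noncomputable instance varFintype : Fintype (G.Var k) := Fintype.ofFinite _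

/-- Height of a node. -/
noncomputable def htn (G : RootedDag) : Fin G.n → ℕ :=
  WellFounded.fix G.wf fun u ih =>
    (Finset.univ.filter (fun c => G.child c u)).attach.sup
      (fun c => ih c.1 (Finset.mem_filter.mp c.2).2) + 1

theorem htn_eq (u : Fin G.n) : htn G u =
    (Finset.univ.filter (fun c => G.child c u)).attach.sup (fun c => htn G c.1) + 1 := by
  unfold htn
  rw [WellFounded.fix_eq]

theorem htn_lt {c u : Fin G.n} (hc : G.child c u) : htn G c < htn G u := by
  rw [htn_eq u]
  have hmem : c ∈ Finset.univ.filter (fun c => G.child c u) :=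
    Finset.mem_filter.mpr ⟨Finset.mem_univ c, hc⟩
  have := Finset.le_sup (f := fun c' : {x // x ∈ Finset.univ.filter (fun c => G.child c u)} =>
    htn G c'.1) (Finset.mem_attach _ ⟨c, hmem⟩)
  have h2 : htn G c ≤ (Finset.univ.filter (fun c => G.child c u)).attach.sup
    (fun c' => htn G c'.1) := this
  omega

/-- A height-compatible injective key on variables. -/
noncomputable def keyv (x : G.Var k) : ℕ :=
  htn G (nodeOf x) * Fintype.card (G.Var k) + (Fintype.equivFin (G.Var k) x).val

theorem keyv_inj {x y : G.Var k} (h : keyv x = keyv y) : x = y := by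
  have hx := (Fintype.equivFin (G.Var k) x).isLt
  have hy := (Fintype.equivFin (G.Var k) y).isLt
  rw [keyv, keyv] at h
  have h2 : (Fintype.equivFin (G.Var k) x) = (Fintype.equivFin (G.Var k) y) := by
    apply Fin.ext
    rcases Nat.lt_trichotomy (htn G (nodeOf x)) (htn G (nodeOf y)) with hl | hl | hl
    · nlinarith
    · rw [hl] at h; omega
    · nlinarith
  exact (Fintype.equivFin (G.Var k)).injective h2

theorem keyv_lt {x y : G.Var k} (h : htn G (nodeOf x) < htn G (nodeOf y)) :
    keyv x < keyv y := by
  have hx := (Fintype.equivFin (G.Var k) x).isLt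
  rw [keyv, keyv]
  nlinarith [Nat.zero_le ((Fintype.equivFin (G.Var k) y).val)]

theorem keyv_ht_le {x y : G.Var k} (h : keyv x ≤ keyv y) :
    htn G (nodeOf x) ≤ htn G (nodeOf y) := by
  by_contra hcon
  push_neg at hcon
  exact absurd (keyv_lt hcon) (by omega)

section Encoding

variable (hn : 2 ≤ G.n) (hk : 2 ≤ k)
variable (hsolve : G.SolvesDE hkp B) (hthrifty : G.Thrifty B)
variable {p : ℕ} (hp : pebCost (Fin G.n) G.child G.root = p) (hp1 : 1 ≤ p)

/-- The bottleneck time. -/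
noncomputable def tstar (I : G.Var k → Fin k) : ℕ :=
  Classical.choose (exists_bottleneck hn hk hsolve hthrifty hp hp1 I)

theorem tstar_le (I : G.Var k → Fin k) :
    tstar hn hk hsolve hthrifty hp hp1 I ≤ ltq hsolve I G.root :=
  (Classical.choose_spec (exists_bottleneck hn hk hsolve hthrifty hp hp1 I)).1

theorem tstar_card (I : G.Var k → Fin k) :
    p ≤ (Cfg hsolve I (tstar hn hk hsolve hthrifty hp hp1 I)).card :=
  (Classical.choose_spec (exists_bottleneck hn hk hsolve hthrifty hp hp1 I)).2

theorem tstar_lt_T (I : G.Var k → Fin k) :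
    tstar hn hk hsolve hthrifty hp hp1 I < T hsolve I :=
  lt_of_le_of_lt (tstar_le hn hk hsolve hthrifty hp hp1 I)
    (ltq_root_lt_T hn hk hsolve hthrifty)

/-- Length of the future computation. -/
noncomputable def Llen (I : G.Var k → Fin k) : ℕ :=
  T hsolve I - tstar hn hk hsolve hthrifty hp hp1 I

/-- The variable queried at relative future time `j`. -/
noncomputable def label (I : G.Var k → Fin k) (j : ℕ) : G.Var k :=
  B.query (B.path I (tstar hn hk hsolve hthrifty hp hp1 I + j))

noncomputable def nodeAt (I : G.Var k → Fin k) (j : ℕ) : Fin G.n :=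
  nodeOf (label hn hk hsolve hthrifty hp hp1 I j)

theorem label_cvar {I : G.Var k → Fin k} {j : ℕ}
    (hj : j < Llen hn hk hsolve hthrifty hp hp1 I) :
    label hn hk hsolve hthrifty hp hp1 I j =
      cvar I (nodeAt hn hk hsolve hthrifty hp hp1 I j) := by
  have hlt : tstar hn hk hsolve hthrifty hp hp1 I + j < T hsolve I := by
    have h1 := tstar_lt_T hn hk hsolve hthrifty hp hp1 I
    rw [Llen] at hj
    omega
  exact query_cvar hsolve hthrifty I hlt

theorem label_qtime {I : G.Var k → Fin k} {j : ℕ}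
    (hj : j < Llen hn hk hsolve hthrifty hp hp1 I) :
    qtime hsolve I (nodeAt hn hk hsolve hthrifty hp hp1 I j)
      (tstar hn hk hsolve hthrifty hp hp1 I + j) := by
  refine ⟨?_, label_cvar hn hk hsolve hthrifty hp hp1 hj⟩
  rw [Llen] at hj
  omega

/-- qtimes in the future window correspond to future labels. -/
theorem qtime_future {I : G.Var k → Fin k} {v : Fin G.n} {s : ℕ}
    (hs : qtime hsolve I v s) (hge : tstar hn hk hsolve hthrifty hp hp1 I ≤ s) :
    s - tstar hn hk hsolve hthrifty hp hp1 I < Llen hn hk hsolve hthrifty hp hp1 I ∧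
    nodeAt hn hk hsolve hthrifty hp hp1 I (s - tstar hn hk hsolve hthrifty hp hp1 I) = v := by
  have h1 : s < T hsolve I := hs.1
  constructor
  · rw [Llen]; omega
  · have h2 : label hn hk hsolve hthrifty hp hp1 I (s - tstar hn hk hsolve hthrifty hp hp1 I)
        = cvar I v := by
      rw [label, Nat.add_sub_cancel' hge]
      exact hs.2
    rw [nodeAt, h2, nodeOf_cvar]

/-- The node `v` is "learned" before relative step `j`. -/
def Learned (I : G.Var k → Fin k) (j : ℕ) (v : Fin G.n) : Prop :=
  ∃ j', j' < j ∧ j' < Llen hn hk hsolve hthrifty hp hp1 I ∧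
    (v = nodeAt hn hk hsolve hthrifty hp hp1 I j' ∨
      G.child v (nodeAt hn hk hsolve hthrifty hp hp1 I j'))

/-- Relative step `j` consumes a fresh value from the stream. -/
def consume (I : G.Var k → Fin k) (j : ℕ) : Prop :=
  j < Llen hn hk hsolve hthrifty hp hp1 I ∧
    ¬ Learned hn hk hsolve hthrifty hp hp1 I j (nodeAt hn hk hsolve hthrifty hp hp1 I j)

noncomputable instance consumeDec (I : G.Var k → Fin k) :
    DecidablePred (consume hn hk hsolve hthrifty hp hp1 I) := fun _ => Classical.dec _

/-- The set of consuming steps. -/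
noncomputable def CS (I : G.Var k → Fin k) : Finset ℕ :=
  (Finset.range (Llen hn hk hsolve hthrifty hp hp1 I)).filter
    (consume hn hk hsolve hthrifty hp hp1 I)

noncomputable def mcnt (I : G.Var k → Fin k) : ℕ := (CS hn hk hsolve hthrifty hp hp1 I).card

/-- Position of consuming step `j` in the stream. -/
noncomputable def cnt (I : G.Var k → Fin k) (j : ℕ) : ℕ :=
  ((CS hn hk hsolve hthrifty hp hp1 I).filter (· < j)).card

theorem cnt_lt_mcnt {I : G.Var k → Fin k} {j : ℕ} (hj : j ∈ CS hn hk hsolve hthrifty hp hp1 I) :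
    cnt hn hk hsolve hthrifty hp hp1 I j < mcnt hn hk hsolve hthrifty hp hp1 I := by
  rw [cnt, mcnt]
  refine Finset.card_lt_card ?_
  rw [Finset.ssubset_iff_of_subset (Finset.filter_subset _ _)]
  exact ⟨j, hj, fun hmem => absurd (Finset.mem_filter.mp hmem).2 (lt_irrefl j)⟩

theorem cnt_strict {I : G.Var k → Fin k} {j j' : ℕ}
    (hj : j ∈ CS hn hk hsolve hthrifty hp hp1 I) (hlt : j < j') :
    cnt hn hk hsolve hthrifty hp hp1 I j < cnt hn hk hsolve hthrifty hp hp1 I j' := by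
  rw [cnt, cnt]
  refine Finset.card_lt_card ?_
  constructor
  · intro a ha
    rw [Finset.mem_filter] at ha ⊢
    exact ⟨ha.1, by omega⟩
  · intro hsub
    have hj2 : j ∈ (CS hn hk hsolve hthrifty hp hp1 I).filter (· < j') :=
      Finset.mem_filter.mpr ⟨hj, hlt⟩
    have := hsub hj2
    rw [Finset.mem_filter] at this
    omega

theorem cnt_inj {I : G.Var k → Fin k} {j j' : ℕ}
    (hj : j ∈ CS hn hk hsolve hthrifty hp hp1 I) (hj' : j' ∈ CS hn hk hsolve hthrifty hp hp1 I)
    (h : cnt hn hk hsolve hthrifty hp hp1 I j = cnt hn hk hsolve hthrifty hp hp1 I j') :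
    j = j' := by
  rcases Nat.lt_trichotomy j j' with hl | hl | hl
  · have := cnt_strict hn hk hsolve hthrifty hp hp1 hj hl; omega
  · exact hl
  · have := cnt_strict hn hk hsolve hthrifty hp hp1 hj' hl; omega

/-- The chosen `p`-subset of the bottleneck configuration (as a sorted list prefix). -/
noncomputable def PP (I : G.Var k → Fin k) : Finset (Fin G.n) :=
  (((Cfg hsolve I (tstar hn hk hsolve hthrifty hp hp1 I)).sort (· ≤ ·)).take p).toFinset

theorem PP_subset (I : G.Var k → Fin k) :
    PP hn hk hsolve hthrifty hp hp1 I ⊆ Cfg hsolve I (tstar hn hk hsolve hthrifty hp hp1 I) := by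
  intro v hv
  rw [PP, List.mem_toFinset] at hv
  have := List.mem_of_mem_take hv
  rwa [Finset.mem_sort] at this

theorem PP_card (I : G.Var k → Fin k) : (PP hn hk hsolve hthrifty hp hp1 I).card = p := by
  rw [PP]
  rw [List.card_toFinset, List.Nodup.dedup]
  · rw [List.length_take, Finset.length_sort]
    have := tstar_card hn hk hsolve hthrifty hp hp1 I
    omega
  · exact List.Nodup.sublist (List.take_sublist _ _) (Finset.sort_nodup _ _)

def isCrit (I : G.Var k → Fin k) (x : G.Var k) : Prop :=
  ∃ v ∈ PP hn hk hsolve hthrifty hp hp1 I, x = cvar I v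

def isQaft (I : G.Var k → Fin k) (x : G.Var k) : Prop :=
  ∃ j, j < Llen hn hk hsolve hthrifty hp hp1 I ∧ label hn hk hsolve hthrifty hp hp1 I j = x

def isElse (I : G.Var k → Fin k) (x : G.Var k) : Prop :=
  ¬ isCrit hn hk hsolve hthrifty hp hp1 I x ∧ ¬ isQaft hn hk hsolve hthrifty hp hp1 I x

noncomputable instance isElseDec (I : G.Var k → Fin k) :
    DecidablePred (isElse hn hk hsolve hthrifty hp hp1 I) := fun _ => Classical.dec _

/-- Rank of an "else" variable among else variables by key. -/
noncomputable def rnk (I : G.Var k → Fin k) (x : G.Var k) : ℕ :=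
  (Finset.univ.filter (fun y => isElse hn hk hsolve hthrifty hp hp1 I y ∧ keyv y < keyv x)).card

noncomputable def eCnt (I : G.Var k → Fin k) : ℕ :=
  (Finset.univ.filter (isElse hn hk hsolve hthrifty hp hp1 I)).card

theorem rnk_lt_eCnt {I : G.Var k → Fin k} {x : G.Var k}
    (hx : isElse hn hk hsolve hthrifty hp hp1 I x) :
    rnk hn hk hsolve hthrifty hp hp1 I x < eCnt hn hk hsolve hthrifty hp hp1 I := by
  rw [rnk, eCnt]
  refine Finset.card_lt_card ?_
  constructor
  · intro a ha
    rw [Finset.mem_filter] at ha ⊢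
    exact ⟨ha.1, ha.2.1⟩
  · intro hsub
    have hx2 : x ∈ Finset.univ.filter (isElse hn hk hsolve hthrifty hp hp1 I) :=
      Finset.mem_filter.mpr ⟨Finset.mem_univ x, hx⟩
    have := hsub hx2
    rw [Finset.mem_filter] at this
    omega

theorem rnk_strict {I : G.Var k → Fin k} {x y : G.Var k}
    (hx : isElse hn hk hsolve hthrifty hp hp1 I x) (hlt : keyv x < keyv y) :
    rnk hn hk hsolve hthrifty hp hp1 I x < rnk hn hk hsolve hthrifty hp hp1 I y := by
  rw [rnk, rnk]
  refine Finset.card_lt_card ?_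
  constructor
  · intro a ha
    rw [Finset.mem_filter] at ha ⊢
    exact ⟨ha.1, ha.2.1, by omega⟩
  · intro hsub
    have hx2 : x ∈ Finset.univ.filter
        (fun y' => isElse hn hk hsolve hthrifty hp hp1 I y' ∧ keyv y' < keyv y) :=
      Finset.mem_filter.mpr ⟨Finset.mem_univ x, hx, hlt⟩
    have := hsub hx2
    rw [Finset.mem_filter] at this
    omega

theorem rnk_inj {I : G.Var k → Fin k} {x y : G.Var k}
    (hx : isElse hn hk hsolve hthrifty hp hp1 I x) (hy : isElse hn hk hsolve hthrifty hp hp1 I y)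
    (h : rnk hn hk hsolve hthrifty hp hp1 I x = rnk hn hk hsolve hthrifty hp hp1 I y) :
    x = y := by
  rcases Nat.lt_trichotomy (keyv x) (keyv y) with hl | hl | hl
  · have := rnk_strict hn hk hsolve hthrifty hp hp1 hx hl; omega
  · exact keyv_inj hl
  · have := rnk_strict hn hk hsolve hthrifty hp hp1 hy hl; omega

end Encoding
end ThriftyPf
namespace ThriftyPf
open Relation

variable {G : RootedDag} {k : ℕ} {B : BP (G.Var k) k Bool} {hkp : 0 < k}

section Encoding2

variable (hn : 2 ≤ G.n) (hk : 2 ≤ k)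
variable (hsolve : G.SolvesDE hkp B) (hthrifty : G.Thrifty B)
variable {p : ℕ} (hp : pebCost (Fin G.n) G.child G.root = p) (hp1 : 1 ≤ p)

noncomputable def critF (I : G.Var k → Fin k) : Finset (G.Var k) :=
  (PP hn hk hsolve hthrifty hp hp1 I).image (cvar I)

theorem mem_critF {I : G.Var k → Fin k} {x : G.Var k} :
    x ∈ critF hn hk hsolve hthrifty hp hp1 I ↔ isCrit hn hk hsolve hthrifty hp hp1 I x := by
  rw [critF, Finset.mem_image, isCrit]
  constructor
  · rintro ⟨v, hv, he⟩; exact ⟨v, hv, he.symm⟩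
  · rintro ⟨v, hv, he⟩; exact ⟨v, hv, he.symm⟩

theorem critF_card (I : G.Var k → Fin k) : (critF hn hk hsolve hthrifty hp hp1 I).card = p := by
  rw [critF, Finset.card_image_of_injOn (fun a _ b _ h => cvar_inj h)]
  exact PP_card hn hk hsolve hthrifty hp hp1 I

noncomputable def qaftF (I : G.Var k → Fin k) : Finset (G.Var k) :=
  (Finset.range (Llen hn hk hsolve hthrifty hp hp1 I)).image
    (label hn hk hsolve hthrifty hp hp1 I)

theorem mem_qaftF {I : G.Var k → Fin k} {x : G.Var k} :
    x ∈ qaftF hn hk hsolve hthrifty hp hp1 I ↔ isQaft hn hk hsolve hthrifty hp hp1 I x := by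
  rw [qaftF, Finset.mem_image, isQaft]
  constructor
  · rintro ⟨j, hj, he⟩; exact ⟨j, Finset.mem_range.mp hj, he⟩
  · rintro ⟨j, hj, he⟩; exact ⟨j, Finset.mem_range.mpr hj, he⟩

theorem root_not_mem_PPCfg (I : G.Var k → Fin k) :
    G.root ∉ Cfg hsolve I (tstar hn hk hsolve hthrifty hp hp1 I) := by
  rw [root_mem_Cfg hn hk hsolve hthrifty]
  have := tstar_le hn hk hsolve hthrifty hp hp1 I
  omega

theorem cfg_witness {I : G.Var k → Fin k} {v : Fin G.n}
    (hv : v ∈ Cfg hsolve I (tstar hn hk hsolve hthrifty hp hp1 I)) :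
    ∃ w t', G.child v w ∧ Useful hsolve I w t' ∧
      tstar hn hk hsolve hthrifty hp hp1 I ≤ t' ∧
      lb hsolve I v t' < tstar hn hk hsolve hthrifty hp hp1 I := by
  rw [mem_Cfg] at hv
  rcases hv with ⟨hroot, hlt⟩ | h
  · have := tstar_le hn hk hsolve hthrifty hp hp1 I
    omega
  · exact h

/-- A node pebbled at the bottleneck cannot be "consumed" during the future computation:
by the time its variable is queried again its value has been revealed by a parent query. -/
theorem crit_learned {I : G.Var k → Fin k} {v : Fin G.n}
    (hv : v ∈ Cfg hsolve I (tstar hn hk hsolve hthrifty hp hp1 I)) {j : ℕ}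
    (hj : j ∈ CS hn hk hsolve hthrifty hp hp1 I)
    (hnode : nodeAt hn hk hsolve hthrifty hp hp1 I j = v) : False := by
  rw [CS, Finset.mem_filter, Finset.mem_range] at hj
  obtain ⟨hjL, hjC⟩ := hj
  have hq : qtime hsolve I v (tstar hn hk hsolve hthrifty hp hp1 I + j) :=
    hnode ▸ label_qtime hn hk hsolve hthrifty hp hp1 hjL
  obtain ⟨w, t', hcw, hw, h1, h2⟩ := cfg_witness hn hk hsolve hthrifty hp hp1 hv
  have hqw : qtime hsolve I w t' := useful_qtime hn hk hsolve hthrifty hw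
  rcases Nat.lt_trichotomy (tstar hn hk hsolve hthrifty hp hp1 I + j) t' with hc | hc | hc
  · have := le_lb hsolve hq hc
    omega
  · have hvw : v = w := qtime_unique hsolve hthrifty hq (hc ▸ hqw)
    subst hvw
    exact not_transGen_self v (TransGen.single hcw)
  · have hge : tstar hn hk hsolve hthrifty hp hp1 I ≤ t' := h1
    obtain ⟨hlt2, hnode2⟩ := qtime_future hn hk hsolve hthrifty hp hp1 hqw hge
    refine hjC.2 ⟨t' - tstar hn hk hsolve hthrifty hp hp1 I, by omega, hlt2, ?_⟩
    rw [hnode2, hnode]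
    exact Or.inr hcw

theorem CS_label_inj {I : G.Var k → Fin k} {j j' : ℕ}
    (hj : j ∈ CS hn hk hsolve hthrifty hp hp1 I) (hj' : j' ∈ CS hn hk hsolve hthrifty hp hp1 I)
    (h : label hn hk hsolve hthrifty hp hp1 I j = label hn hk hsolve hthrifty hp hp1 I j') :
    j = j' := by
  have hnode : nodeAt hn hk hsolve hthrifty hp hp1 I j =
      nodeAt hn hk hsolve hthrifty hp hp1 I j' := by rw [nodeAt, nodeAt, h]
  rcases Nat.lt_trichotomy j j' with hc | hc | hc
  · exfalso
    rw [CS, Finset.mem_filter, Finset.mem_range] at hj hj'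
    exact hj'.2.2 ⟨j, hc, hj.1, Or.inl hnode.symm⟩
  · exact hc
  · exfalso
    rw [CS, Finset.mem_filter, Finset.mem_range] at hj hj'
    exact hj.2.2 ⟨j', hc, hj'.1, Or.inl hnode⟩

theorem label_not_crit {I : G.Var k → Fin k} {j : ℕ}
    (hj : j ∈ CS hn hk hsolve hthrifty hp hp1 I) :
    label hn hk hsolve hthrifty hp hp1 I j ∉ critF hn hk hsolve hthrifty hp hp1 I := by
  intro hmem
  rw [mem_critF] at hmem
  obtain ⟨v, hv, he⟩ := hmem
  have hjL : j < Llen hn hk hsolve hthrifty hp hp1 I := by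
    rw [CS, Finset.mem_filter, Finset.mem_range] at hj
    exact hj.1
  have hnode : nodeAt hn hk hsolve hthrifty hp hp1 I j = v := by
    rw [nodeAt, he, nodeOf_cvar]
  exact crit_learned hn hk hsolve hthrifty hp hp1
    (PP_subset hn hk hsolve hthrifty hp hp1 I hv) hj hnode

theorem mcnt_le (I : G.Var k → Fin k) :
    mcnt hn hk hsolve hthrifty hp hp1 I ≤
      (qaftF hn hk hsolve hthrifty hp hp1 I \ critF hn hk hsolve hthrifty hp hp1 I).card := by
  rw [mcnt]
  refine Finset.card_le_card_of_injOn (label hn hk hsolve hthrifty hp hp1 I) ?_ ?_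
  · intro j hj
    rw [Finset.mem_coe, Finset.mem_sdiff]
    constructor
    · rw [mem_qaftF]
      rw [Finset.mem_coe, CS, Finset.mem_filter, Finset.mem_range] at hj
      exact ⟨j, hj.1, rfl⟩
    · exact label_not_crit hn hk hsolve hthrifty hp hp1 hj
  · exact fun j hj j' hj' h => CS_label_inj hn hk hsolve hthrifty hp hp1 hj hj' h

theorem isElse_iff {I : G.Var k → Fin k} {x : G.Var k} :
    isElse hn hk hsolve hthrifty hp hp1 I x ↔
      x ∉ critF hn hk hsolve hthrifty hp hp1 I ∪ qaftF hn hk hsolve hthrifty hp hp1 I := by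
  rw [isElse, Finset.mem_union, mem_critF, mem_qaftF]
  tauto

theorem stream_bound (I : G.Var k → Fin k) :
    mcnt hn hk hsolve hthrifty hp hp1 I + eCnt hn hk hsolve hthrifty hp hp1 I ≤
      Fintype.card (G.Var k) - p := by
  have h1 : eCnt hn hk hsolve hthrifty hp hp1 I = Fintype.card (G.Var k) -
      (critF hn hk hsolve hthrifty hp hp1 I ∪ qaftF hn hk hsolve hthrifty hp hp1 I).card := by
    rw [eCnt]
    have he : Finset.univ.filter (isElse hn hk hsolve hthrifty hp hp1 I) =
        Finset.univ \ (critF hn hk hsolve hthrifty hp hp1 I ∪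
          qaftF hn hk hsolve hthrifty hp hp1 I) := by
      ext x
      rw [Finset.mem_filter, Finset.mem_sdiff]
      constructor
      · intro hx
        exact ⟨Finset.mem_univ x, (isElse_iff hn hk hsolve hthrifty hp hp1).mp hx.2⟩
      · intro hx
        exact ⟨Finset.mem_univ x, (isElse_iff hn hk hsolve hthrifty hp hp1).mpr hx.2⟩
    rw [he, Finset.card_sdiff_of_subset (Finset.subset_univ _), Finset.card_univ]
  have h2 : (critF hn hk hsolve hthrifty hp hp1 I ∪ qaftF hn hk hsolve hthrifty hp hp1 I).card
      = p + (qaftF hn hk hsolve hthrifty hp hp1 I \ critF hn hk hsolve hthrifty hp hp1 I).card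
      := by
    rw [← Finset.union_sdiff_self_eq_union,
      Finset.card_union_of_disjoint Finset.disjoint_sdiff,
      critF_card hn hk hsolve hthrifty hp hp1]
  have h3 : (critF hn hk hsolve hthrifty hp hp1 I ∪ qaftF hn hk hsolve hthrifty hp hp1 I).card
      ≤ Fintype.card (G.Var k) := by
    rw [← Finset.card_univ]
    exact Finset.card_le_card (Finset.subset_univ _)
  have h4 := mcnt_le hn hk hsolve hthrifty hp hp1 I
  omega

/-- The stream of values encoding the input given the bottleneck state. -/
noncomputable def stream (I : G.Var k → Fin k) : Fin (Fintype.card (G.Var k) - p) → Fin k :=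
  fun i =>
    if h1 : ∃ j, j ∈ CS hn hk hsolve hthrifty hp hp1 I ∧
        cnt hn hk hsolve hthrifty hp hp1 I j = i.1 then
      G.val I (nodeAt hn hk hsolve hthrifty hp hp1 I (Classical.choose h1))
    else if h2 : ∃ x, isElse hn hk hsolve hthrifty hp hp1 I x ∧
        mcnt hn hk hsolve hthrifty hp hp1 I + rnk hn hk hsolve hthrifty hp hp1 I x = i.1 then
      I (Classical.choose h2)
    else ⟨0, hkp⟩

theorem stream_spec1 {I : G.Var k → Fin k} {j : ℕ}
    (hj : j ∈ CS hn hk hsolve hthrifty hp hp1 I)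
    (hi : cnt hn hk hsolve hthrifty hp hp1 I j < Fintype.card (G.Var k) - p) :
    stream hn hk hsolve hthrifty hp hp1 I ⟨cnt hn hk hsolve hthrifty hp hp1 I j, hi⟩ =
      G.val I (nodeAt hn hk hsolve hthrifty hp hp1 I j) := by
  rw [stream]
  have h1 : ∃ j', j' ∈ CS hn hk hsolve hthrifty hp hp1 I ∧
      cnt hn hk hsolve hthrifty hp hp1 I j' =
        (⟨cnt hn hk hsolve hthrifty hp hp1 I j, hi⟩ : Fin _).1 := ⟨j, hj, rfl⟩
  rw [dif_pos h1]
  obtain ⟨hmem, heq⟩ := Classical.choose_spec h1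
  have : Classical.choose h1 = j := cnt_inj hn hk hsolve hthrifty hp hp1 hmem hj heq
  rw [this]

theorem stream_spec2 {I : G.Var k → Fin k} {x : G.Var k}
    (hx : isElse hn hk hsolve hthrifty hp hp1 I x)
    (hi : mcnt hn hk hsolve hthrifty hp hp1 I + rnk hn hk hsolve hthrifty hp hp1 I x <
      Fintype.card (G.Var k) - p) :
    stream hn hk hsolve hthrifty hp hp1 I
      ⟨mcnt hn hk hsolve hthrifty hp hp1 I + rnk hn hk hsolve hthrifty hp hp1 I x, hi⟩ = I x
    := by
  rw [stream]
  have h1 : ¬ ∃ j, j ∈ CS hn hk hsolve hthrifty hp hp1 I ∧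
      cnt hn hk hsolve hthrifty hp hp1 I j =
        (⟨mcnt hn hk hsolve hthrifty hp hp1 I + rnk hn hk hsolve hthrifty hp hp1 I x, hi⟩
          : Fin _).1 := by
    rintro ⟨j, hj, he⟩
    have := cnt_lt_mcnt hn hk hsolve hthrifty hp hp1 hj
    simp only at he
    omega
  rw [dif_neg h1]
  have h2 : ∃ y, isElse hn hk hsolve hthrifty hp hp1 I y ∧
      mcnt hn hk hsolve hthrifty hp hp1 I + rnk hn hk hsolve hthrifty hp hp1 I y =
        (⟨mcnt hn hk hsolve hthrifty hp hp1 I + rnk hn hk hsolve hthrifty hp hp1 I x, hi⟩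
          : Fin _).1 := ⟨x, hx, rfl⟩
  rw [dif_pos h2]
  obtain ⟨hmem, heq⟩ := Classical.choose_spec h2
  simp only at heq
  have : Classical.choose h2 = x :=
    rnk_inj hn hk hsolve hthrifty hp hp1 hmem hx (by omega)
  rw [this]

/-- The encoding map. -/
noncomputable def Theta (I : G.Var k → Fin k) :
    B.State × (Fin (Fintype.card (G.Var k) - p) → Fin k) :=
  (B.path I (tstar hn hk hsolve hthrifty hp hp1 I), stream hn hk hsolve hthrifty hp hp1 I)

end Encoding2
end ThriftyPf
namespace ThriftyPf
open Relation

variable {G : RootedDag} {k : ℕ} {B : BP (G.Var k) k Bool} {hkp : 0 < k}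

theorem cvar_eq_val {I I' : G.Var k → Fin k} {w : Fin G.n} (h : cvar I w = cvar I' w)
    {c : Fin G.n} (hc : G.child c w) : G.val I c = G.val I' c := by
  have hwl : ¬ G.IsLeaf w := fun hl => hl c hc
  rw [cvar_neg I hwl, cvar_neg I' hwl] at h
  have h2 := Sum.inr_injective h
  have h3 := (Sigma.mk.inj_iff.mp h2).2
  have h4 : (fun v : {v : Fin G.n // G.child v w} => G.val I v.1) =
      (fun v : {v : Fin G.n // G.child v w} => G.val I' v.1) := eq_of_heq h3
  exact congrFun h4 ⟨c, hc⟩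

theorem htn_lt_of_transGen {c u : Fin G.n} (h : TransGen G.child c u) :
    htn G c < htn G u := by
  induction h with
  | single h => exact htn_lt h
  | tail _ h ih => exact lt_trans ih (htn_lt h)

section Inj

variable (hn : 2 ≤ G.n) (hk : 2 ≤ k)
variable (hsolve : G.SolvesDE hkp B) (hthrifty : G.Thrifty B)
variable {p : ℕ} (hp : pebCost (Fin G.n) G.child G.root = p) (hp1 : 1 ≤ p)
variable {I I' : G.Var k → Fin k}

theorem future_eq
    (hq0 : B.path I' (tstar hn hk hsolve hthrifty hp hp1 I') =
      B.path I (tstar hn hk hsolve hthrifty hp hp1 I))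
    (hstream : stream hn hk hsolve hthrifty hp hp1 I = stream hn hk hsolve hthrifty hp hp1 I') :
    ∀ j, j ≤ Llen hn hk hsolve hthrifty hp hp1 I →
      (j ≤ Llen hn hk hsolve hthrifty hp hp1 I' ∧
       (∀ i, i ≤ j → B.path I' (tstar hn hk hsolve hthrifty hp hp1 I' + i) =
          B.path I (tstar hn hk hsolve hthrifty hp hp1 I + i)) ∧
       (∀ i, i < j → G.val I (nodeAt hn hk hsolve hthrifty hp hp1 I i) =
          G.val I' (nodeAt hn hk hsolve hthrifty hp hp1 I' i))) := by
  set a := tstar hn hk hsolve hthrifty hp hp1 I with ha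
  set a' := tstar hn hk hsolve hthrifty hp hp1 I' with ha'
  intro j
  induction j with
  | zero =>
    intro _
    refine ⟨Nat.zero_le _, ?_, ?_⟩
    · intro i hi
      interval_cases i
      simpa using hq0
    · intro i hi; omega
  | succ j ih =>
    intro hj1
    obtain ⟨hjL', hpath, hval⟩ := ih (by omega)
    -- liveness of step j on both sides
    have hjL : j < Llen hn hk hsolve hthrifty hp hp1 I := by omega
    have haT : a + j < T hsolve I := by
      have := tstar_lt_T hn hk hsolve hthrifty hp hp1 I
      rw [Llen] at hjL
      omega
    have ha'T : a' + j < T hsolve I' := by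
      have h1 : a' + j ≤ T hsolve I' := by
        have := tstar_lt_T hn hk hsolve hthrifty hp hp1 I'
        rw [Llen] at hjL'
        omega
      rcases Nat.lt_or_ge (a' + j) (T hsolve I') with h | h
      · exact h
      · exfalso
        have he : a' + j = T hsolve I' := by omega
        have h2 := out_T hsolve I'
        rw [← he, hpath j le_rfl] at h2
        rw [out_lt hsolve I haT] at h2
        exact absurd h2 (by simp)
    have hjL'2 : j < Llen hn hk hsolve hthrifty hp hp1 I' := by
      rw [Llen]; omega
    -- label equality at step j
    have hlab : label hn hk hsolve hthrifty hp hp1 I j =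
        label hn hk hsolve hthrifty hp hp1 I' j := by
      rw [label, label, hpath j le_rfl]
    have hnode : nodeAt hn hk hsolve hthrifty hp hp1 I j =
        nodeAt hn hk hsolve hthrifty hp hp1 I' j := by
      rw [nodeAt, nodeAt, hlab]
    -- node equality at earlier steps
    have hnodes : ∀ i, i < j → nodeAt hn hk hsolve hthrifty hp hp1 I i =
        nodeAt hn hk hsolve hthrifty hp hp1 I' i := by
      intro i hi
      rw [nodeAt, nodeAt, label, label, hpath i (by omega)]
    -- Learned transfer at step j
    have hlearn : ∀ v, Learned hn hk hsolve hthrifty hp hp1 I j v ↔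
        Learned hn hk hsolve hthrifty hp hp1 I' j v := by
      intro v
      constructor
      · rintro ⟨j0, hj0, hj0L, hcase⟩
        exact ⟨j0, hj0, by omega, by rw [← hnodes j0 hj0]; exact hcase⟩
      · rintro ⟨j0, hj0, hj0L, hcase⟩
        exact ⟨j0, hj0, by omega, by rw [hnodes j0 hj0]; exact hcase⟩
    -- value equality at step j
    have hvj : G.val I (nodeAt hn hk hsolve hthrifty hp hp1 I j) =
        G.val I' (nodeAt hn hk hsolve hthrifty hp hp1 I' j) := by
      by_cases hLC : Learned hn hk hsolve hthrifty hp hp1 I j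
          (nodeAt hn hk hsolve hthrifty hp hp1 I j)
      · obtain ⟨j0, hj0, hj0L, hcase⟩ := hLC
        rcases hcase with hcase | hcase
        · have hv0 := hval j0 hj0
          rw [← hnodes j0 hj0] at hv0
          rw [← hnode, hcase]
          exact hv0
        · -- learned from a parent query at step j0
          have hlab0 : label hn hk hsolve hthrifty hp hp1 I j0 =
              label hn hk hsolve hthrifty hp hp1 I' j0 := by
            rw [label, label, hpath j0 (by omega)]
          have hcv : cvar I (nodeAt hn hk hsolve hthrifty hp hp1 I j0) =
              cvar I' (nodeAt hn hk hsolve hthrifty hp hp1 I j0) := by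
            have e1 := label_cvar hn hk hsolve hthrifty hp hp1 hj0L
            have e2 := label_cvar hn hk hsolve hthrifty hp hp1 (I := I')
              (show j0 < Llen hn hk hsolve hthrifty hp hp1 I' by omega)
            rw [e1, e2] at hlab0
            rw [hlab0, hnodes j0 hj0]
          rw [← hnode]
          exact cvar_eq_val hcv hcase
      · -- consumed step
        have hjCS : j ∈ CS hn hk hsolve hthrifty hp hp1 I := by
          rw [CS, Finset.mem_filter, Finset.mem_range]
          exact ⟨hjL, hjL, hLC⟩
        have hjCS' : j ∈ CS hn hk hsolve hthrifty hp hp1 I' := by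
          rw [CS, Finset.mem_filter, Finset.mem_range]
          refine ⟨hjL'2, hjL'2, fun hc => hLC ?_⟩
          refine (hlearn _).mpr ?_
          rw [hnode]
          exact hc
        -- the prefix of consuming steps is the same
        have hCSpre : (CS hn hk hsolve hthrifty hp hp1 I).filter (· < j) =
            (CS hn hk hsolve hthrifty hp hp1 I').filter (· < j) := by
          ext i
          rw [Finset.mem_filter, Finset.mem_filter, CS, CS, Finset.mem_filter,
            Finset.mem_filter, Finset.mem_range, Finset.mem_range]
          constructor
          · rintro ⟨⟨hiR, hiL, hiN⟩, hij⟩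
            have hij' : i < j := hij
            have hiL' : i < Llen hn hk hsolve hthrifty hp hp1 I' := by omega
            refine ⟨⟨hiL', hiL', ?_⟩, hij⟩
            rw [nodeAt, ← (by rw [label, label, hpath i (by omega)] :
              label hn hk hsolve hthrifty hp hp1 I i =
                label hn hk hsolve hthrifty hp hp1 I' i), ← nodeAt]
            intro hc
            refine hiN ?_
            obtain ⟨j0, hj0, hj0L, hcase⟩ := hc
            exact ⟨j0, hj0, by omega, by rw [hnodes j0 (by omega)]; exact hcase⟩
          · rintro ⟨⟨hiR, hiL, hiN⟩, hij⟩
            have hij' : i < j := hij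
            have hiL2 : i < Llen hn hk hsolve hthrifty hp hp1 I := by omega
            refine ⟨⟨hiL2, hiL2, ?_⟩, hij⟩
            rw [nodeAt, (by rw [label, label, hpath i (by omega)] :
              label hn hk hsolve hthrifty hp hp1 I i =
                label hn hk hsolve hthrifty hp hp1 I' i), ← nodeAt]
            intro hc
            refine hiN ?_
            obtain ⟨j0, hj0, hj0L, hcase⟩ := hc
            exact ⟨j0, hj0, by omega, by rw [← hnodes j0 (by omega)]; exact hcase⟩
        have hcnt : cnt hn hk hsolve hthrifty hp hp1 I j =
            cnt hn hk hsolve hthrifty hp hp1 I' j := by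
          rw [cnt, cnt, hCSpre]
        -- use the stream
        have hmb := stream_bound hn hk hsolve hthrifty hp hp1 I
        have hib : cnt hn hk hsolve hthrifty hp hp1 I j < Fintype.card (G.Var k) - p := by
          have := cnt_lt_mcnt hn hk hsolve hthrifty hp hp1 hjCS
          omega
        have e1 := stream_spec1 hn hk hsolve hthrifty hp hp1 hjCS hib
        have hib' : cnt hn hk hsolve hthrifty hp hp1 I' j < Fintype.card (G.Var k) - p := by
          rw [← hcnt]; exact hib
        have e2 := stream_spec1 hn hk hsolve hthrifty hp hp1 hjCS' hib'
        rw [← e1, ← e2, hstream]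
        congr 1
        exact Fin.ext (by simpa using hcnt)
    -- the path step
    have hstep : B.path I' (a' + (j + 1)) = B.path I (a + (j + 1)) := by
      show B.next (B.path I' (a' + j)) (I' (B.query (B.path I' (a' + j)))) =
        B.next (B.path I (a + j)) (I (B.query (B.path I (a + j))))
      rw [hpath j le_rfl]
      congr 1
      have eL : I' (B.query (B.path I (a + j))) =
          G.val I' (nodeAt hn hk hsolve hthrifty hp hp1 I' j) := by
        have e0 : B.query (B.path I (a + j)) = label hn hk hsolve hthrifty hp hp1 I' j := by
          rw [← hpath j le_rfl]; rfl
        rw [e0, label_cvar hn hk hsolve hthrifty hp hp1 (I := I') hjL'2]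
        exact I_cvar I' _
      have eR : I (B.query (B.path I (a + j))) =
          G.val I (nodeAt hn hk hsolve hthrifty hp hp1 I j) := by
        have e0 : B.query (B.path I (a + j)) = label hn hk hsolve hthrifty hp hp1 I j := rfl
        rw [e0, label_cvar hn hk hsolve hthrifty hp hp1 hjL]
        exact I_cvar I _
      rw [eL, eR]
      exact hvj.symm
    refine ⟨by rw [Llen]; omega, ?_, ?_⟩
    · intro i hi
      rcases Nat.lt_or_ge i (j + 1) with h | h
      · exact hpath i (by omega)
      · have : i = j + 1 := by omega
        rw [this]
        exact hstep
    · intro i hi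
      rcases Nat.lt_or_ge i j with h | h
      · exact hval i h
      · have : i = j := by omega
        rw [this]
        exact hvj

end Inj
end ThriftyPf
namespace ThriftyPf
open Relation

variable {G : RootedDag} {k : ℕ} {B : BP (G.Var k) k Bool} {hkp : 0 < k}

section Transfer

variable (hn : 2 ≤ G.n) (hk : 2 ≤ k)
variable (hsolve : G.SolvesDE hkp B) (hthrifty : G.Thrifty B)
variable {p : ℕ} (hp : pebCost (Fin G.n) G.child G.root = p) (hp1 : 1 ≤ p)
variable {I I' : G.Var k → Fin k}
variable (hL : Llen hn hk hsolve hthrifty hp hp1 I = Llen hn hk hsolve hthrifty hp hp1 I')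
variable (hpaths : ∀ i, i ≤ Llen hn hk hsolve hthrifty hp hp1 I →
  B.path I' (tstar hn hk hsolve hthrifty hp hp1 I' + i) =
    B.path I (tstar hn hk hsolve hthrifty hp hp1 I + i))

include hL hpaths
set_option linter.unusedSectionVars false

theorem hnodes_tr : ∀ i, i < Llen hn hk hsolve hthrifty hp hp1 I →
    nodeAt hn hk hsolve hthrifty hp hp1 I i = nodeAt hn hk hsolve hthrifty hp hp1 I' i := by
  intro i hi
  rw [nodeAt, nodeAt, label, label, hpaths i (by omega)]

theorem hlabels_tr : ∀ i, i < Llen hn hk hsolve hthrifty hp hp1 I →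
    label hn hk hsolve hthrifty hp hp1 I i = label hn hk hsolve hthrifty hp hp1 I' i := by
  intro i hi
  rw [label, label, hpaths i (by omega)]

theorem qtime_tr {v : Fin G.n} {s : ℕ} (hq : qtime hsolve I v s)
    (hge : tstar hn hk hsolve hthrifty hp hp1 I ≤ s) :
    qtime hsolve I' v (tstar hn hk hsolve hthrifty hp hp1 I' +
      (s - tstar hn hk hsolve hthrifty hp hp1 I)) := by
  obtain ⟨hlt, hnode⟩ := qtime_future hn hk hsolve hthrifty hp hp1 hq hge
  have h2 := label_qtime hn hk hsolve hthrifty hp hp1 (I := I') (j := s - tstar hn hk hsolve hthrifty hp hp1 I) (by omega)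
  rwa [← hnodes_tr hn hk hsolve hthrifty hp hp1 hL hpaths _ hlt, hnode] at h2

theorem ltq_tr : ltq hsolve I' G.root = tstar hn hk hsolve hthrifty hp hp1 I' +
    (ltq hsolve I G.root - tstar hn hk hsolve hthrifty hp hp1 I) := by
  have ha1 : tstar hn hk hsolve hthrifty hp hp1 I ≤ ltq hsolve I G.root :=
    tstar_le hn hk hsolve hthrifty hp hp1 I
  have ha2 : tstar hn hk hsolve hthrifty hp hp1 I' ≤ ltq hsolve I' G.root :=
    tstar_le hn hk hsolve hthrifty hp hp1 I'
  have hq : qtime hsolve I G.root (ltq hsolve I G.root) :=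
    ltq_mem hsolve (root_queried hsolve hthrifty hn hk I)
  have hq' : qtime hsolve I' G.root (ltq hsolve I' G.root) :=
    ltq_mem hsolve (root_queried hsolve hthrifty hn hk I')
  have h1 := qtime_tr hn hk hsolve hthrifty hp hp1 hL hpaths hq ha1
  have hle1 := le_ltq hsolve h1
  -- reverse direction
  have hpaths' : ∀ i, i ≤ Llen hn hk hsolve hthrifty hp hp1 I' →
      B.path I (tstar hn hk hsolve hthrifty hp hp1 I + i) =
        B.path I' (tstar hn hk hsolve hthrifty hp hp1 I' + i) :=
    fun i hi => (hpaths i (by omega)).symm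
  have h2 := qtime_tr hn hk hsolve hthrifty hp hp1 hL.symm hpaths' hq' ha2
  have hle2 := le_ltq hsolve h2
  omega

theorem lb_tr {v : Fin G.n} {t'' : ℕ}
    (hhex : ∃ s, qtime hsolve I v s ∧ s < t'')
    (hge : tstar hn hk hsolve hthrifty hp hp1 I ≤ lb hsolve I v t'') :
    lb hsolve I' v (tstar hn hk hsolve hthrifty hp hp1 I' +
        (t'' - tstar hn hk hsolve hthrifty hp hp1 I)) =
      tstar hn hk hsolve hthrifty hp hp1 I' +
        (lb hsolve I v t'' - tstar hn hk hsolve hthrifty hp hp1 I) := by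
  obtain ⟨hmem, hlt⟩ := lb_mem hsolve hhex
  have h1 := qtime_tr hn hk hsolve hthrifty hp hp1 hL hpaths hmem hge
  have hle1 : tstar hn hk hsolve hthrifty hp hp1 I' +
      (lb hsolve I v t'' - tstar hn hk hsolve hthrifty hp hp1 I) ≤
      lb hsolve I' v (tstar hn hk hsolve hthrifty hp hp1 I' +
        (t'' - tstar hn hk hsolve hthrifty hp hp1 I)) :=
    le_lb hsolve h1 (by omega)
  set s2 := lb hsolve I' v (tstar hn hk hsolve hthrifty hp hp1 I' +
    (t'' - tstar hn hk hsolve hthrifty hp hp1 I)) with hs2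
  obtain ⟨hmem2, hlt2⟩ : qtime hsolve I' v s2 ∧ s2 < tstar hn hk hsolve hthrifty hp hp1 I' +
      (t'' - tstar hn hk hsolve hthrifty hp hp1 I) := by
    refine lb_mem hsolve ⟨tstar hn hk hsolve hthrifty hp hp1 I' +
      (lb hsolve I v t'' - tstar hn hk hsolve hthrifty hp hp1 I), h1, by omega⟩
  have hge2 : tstar hn hk hsolve hthrifty hp hp1 I' ≤ s2 := by omega
  have hpaths' : ∀ i, i ≤ Llen hn hk hsolve hthrifty hp hp1 I' →
      B.path I (tstar hn hk hsolve hthrifty hp hp1 I + i) =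
        B.path I' (tstar hn hk hsolve hthrifty hp hp1 I' + i) :=
    fun i hi => (hpaths i (by omega)).symm
  have h3 := qtime_tr hn hk hsolve hthrifty hp hp1 hL.symm hpaths' hmem2 hge2
  have hle3 := le_lb hsolve h3 (show tstar hn hk hsolve hthrifty hp hp1 I +
    (s2 - tstar hn hk hsolve hthrifty hp hp1 I') < t'' by omega)
  omega

theorem useful_tr {w : Fin G.n} {t : ℕ} (hw : Useful hsolve I w t)
    (hge : tstar hn hk hsolve hthrifty hp hp1 I ≤ t) :
    Useful hsolve I' w (tstar hn hk hsolve hthrifty hp hp1 I' +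
      (t - tstar hn hk hsolve hthrifty hp hp1 I)) := by
  induction hw with
  | root =>
    rw [← ltq_tr hn hk hsolve hthrifty hp hp1 hL hpaths]
    exact Useful.root
  | @step w' t'' v hw' hcv ih =>
    obtain ⟨s, hs1, hs2⟩ := child_queried hsolve hthrifty hk
      (useful_qtime hn hk hsolve hthrifty hw') hcv
    have hlb : lb hsolve I v t'' < t'' := (lb_mem hsolve ⟨s, hs2, hs1⟩).2
    have hge'' : tstar hn hk hsolve hthrifty hp hp1 I ≤ t'' := by omega
    have ihu := ih hge''
    have hlbtr := lb_tr hn hk hsolve hthrifty hp hp1 hL hpaths ⟨s, hs2, hs1⟩ hge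
    rw [← hlbtr]
    exact ihu.step hcv

theorem cfg_tr : Cfg hsolve I (tstar hn hk hsolve hthrifty hp hp1 I) ⊆
    Cfg hsolve I' (tstar hn hk hsolve hthrifty hp hp1 I') := by
  intro v hv
  obtain ⟨w, t', hcw, hw, h1, h2⟩ := cfg_witness hn hk hsolve hthrifty hp hp1 hv
  have hu' : Useful hsolve I' w (tstar hn hk hsolve hthrifty hp hp1 I' +
      (t' - tstar hn hk hsolve hthrifty hp hp1 I)) :=
    useful_tr hn hk hsolve hthrifty hp hp1 hL hpaths hw h1
  rw [mem_Cfg]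
  refine Or.inr ⟨w, _, hcw, hu', by omega, ?_⟩
  -- show the last query of v before the (transferred) parent query is before the bottleneck
  obtain ⟨s', hs1', hs2'⟩ := child_queried hsolve hthrifty hk
    (useful_qtime hn hk hsolve hthrifty hu') hcw
  obtain ⟨hmem2, hlt2⟩ := lb_mem hsolve (v := v) ⟨s', hs2', hs1'⟩
  by_contra hcon
  push_neg at hcon
  have hpaths' : ∀ i, i ≤ Llen hn hk hsolve hthrifty hp hp1 I' →
      B.path I (tstar hn hk hsolve hthrifty hp hp1 I + i) =
        B.path I' (tstar hn hk hsolve hthrifty hp hp1 I' + i) :=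
    fun i hi => (hpaths i (by omega)).symm
  have h3 := qtime_tr hn hk hsolve hthrifty hp hp1 hL.symm hpaths' hmem2 hcon
  have h4 := le_lb hsolve h3 (show tstar hn hk hsolve hthrifty hp hp1 I +
    (lb hsolve I' v (tstar hn hk hsolve hthrifty hp hp1 I' +
      (t' - tstar hn hk hsolve hthrifty hp hp1 I)) -
        tstar hn hk hsolve hthrifty hp hp1 I') < t' by omega)
  omega

theorem cfgval_tr {v : Fin G.n}
    (hv : v ∈ Cfg hsolve I (tstar hn hk hsolve hthrifty hp hp1 I)) :
    G.val I v = G.val I' v := by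
  obtain ⟨w, t', hcw, hw, h1, h2⟩ := cfg_witness hn hk hsolve hthrifty hp hp1 hv
  have hqw : qtime hsolve I w t' := useful_qtime hn hk hsolve hthrifty hw
  obtain ⟨hjt, hnd⟩ := qtime_future hn hk hsolve hthrifty hp hp1 hqw h1
  have hcv : cvar I w = cvar I' w := by
    have e1 := label_cvar hn hk hsolve hthrifty hp hp1 hjt
    have e2 := label_cvar hn hk hsolve hthrifty hp hp1 (I := I')
      (show t' - tstar hn hk hsolve hthrifty hp hp1 I < Llen hn hk hsolve hthrifty hp hp1 I'
        by omega)
    have e3 := hlabels_tr hn hk hsolve hthrifty hp hp1 hL hpaths _ hjt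
    rw [e1, e2] at e3
    rwa [hnd, ← hnodes_tr hn hk hsolve hthrifty hp hp1 hL hpaths _ hjt, hnd] at e3
  exact cvar_eq_val hcv hcw

end Transfer
end ThriftyPf
namespace ThriftyPf
open Relation

variable {G : RootedDag} {k : ℕ} {B : BP (G.Var k) k Bool} {hkp : 0 < k}

theorem htn_le_of_rtg {a b : Fin G.n} (h : ReflTransGen G.child a b) :
    htn G a ≤ htn G b := by
  induction h with
  | refl => exact le_rfl
  | tail _ hstep ih => exact le_trans ih (le_of_lt (htn_lt hstep))

section Final

variable (hn : 2 ≤ G.n) (hk : 2 ≤ k)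
variable (hsolve : G.SolvesDE hkp B) (hthrifty : G.Thrifty B)
variable {p : ℕ} (hp : pebCost (Fin G.n) G.child G.root = p) (hp1 : 1 ≤ p)
variable {I I' : G.Var k → Fin k}
variable (hL : Llen hn hk hsolve hthrifty hp hp1 I = Llen hn hk hsolve hthrifty hp hp1 I')
variable (hpaths : ∀ i, i ≤ Llen hn hk hsolve hthrifty hp hp1 I →
  B.path I' (tstar hn hk hsolve hthrifty hp hp1 I' + i) =
    B.path I (tstar hn hk hsolve hthrifty hp hp1 I + i))
variable (hvals : ∀ i, i < Llen hn hk hsolve hthrifty hp hp1 I →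
  G.val I (nodeAt hn hk hsolve hthrifty hp hp1 I i) =
    G.val I' (nodeAt hn hk hsolve hthrifty hp hp1 I' i))
variable (hstream : stream hn hk hsolve hthrifty hp hp1 I =
    stream hn hk hsolve hthrifty hp hp1 I')
variable (hCfg : Cfg hsolve I (tstar hn hk hsolve hthrifty hp hp1 I) =
    Cfg hsolve I' (tstar hn hk hsolve hthrifty hp hp1 I'))

include hL hpaths
set_option linter.unusedSectionVars false

theorem isQaft_tr (y : G.Var k) : isQaft hn hk hsolve hthrifty hp hp1 I y ↔
    isQaft hn hk hsolve hthrifty hp hp1 I' y := by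
  rw [isQaft, isQaft]
  constructor
  · rintro ⟨j, hj, he⟩
    refine ⟨j, by omega, ?_⟩
    rw [← hlabels_tr hn hk hsolve hthrifty hp hp1 hL hpaths j hj]
    exact he
  · rintro ⟨j, hj, he⟩
    have hj2 : j < Llen hn hk hsolve hthrifty hp hp1 I := by omega
    refine ⟨j, hj2, ?_⟩
    rw [hlabels_tr hn hk hsolve hthrifty hp hp1 hL hpaths j hj2]
    exact he

theorem CS_eq : CS hn hk hsolve hthrifty hp hp1 I = CS hn hk hsolve hthrifty hp hp1 I' := by
  ext i
  rw [CS, CS, Finset.mem_filter, Finset.mem_filter, Finset.mem_range, Finset.mem_range]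
  have hlearn : ∀ j v, j < Llen hn hk hsolve hthrifty hp hp1 I →
      (Learned hn hk hsolve hthrifty hp hp1 I j v ↔
        Learned hn hk hsolve hthrifty hp hp1 I' j v) := by
    intro j v hj
    constructor
    · rintro ⟨j0, hj0, hj0L, hcase⟩
      exact ⟨j0, hj0, by omega,
        by rw [← hnodes_tr hn hk hsolve hthrifty hp hp1 hL hpaths j0 hj0L]; exact hcase⟩
    · rintro ⟨j0, hj0, hj0L, hcase⟩
      have hj0L2 : j0 < Llen hn hk hsolve hthrifty hp hp1 I := by omega
      exact ⟨j0, hj0, hj0L2,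
        by rw [hnodes_tr hn hk hsolve hthrifty hp hp1 hL hpaths j0 hj0L2]; exact hcase⟩
  constructor
  · rintro ⟨hiR, hiL, hiN⟩
    refine ⟨by omega, by omega, ?_⟩
    rw [← hnodes_tr hn hk hsolve hthrifty hp hp1 hL hpaths i hiL]
    exact fun hc => hiN ((hlearn i _ hiL).mpr hc)
  · rintro ⟨hiR, hiL, hiN⟩
    have hiL2 : i < Llen hn hk hsolve hthrifty hp hp1 I := by omega
    refine ⟨hiL2, hiL2, ?_⟩
    rw [hnodes_tr hn hk hsolve hthrifty hp hp1 hL hpaths i hiL2]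
    exact fun hc => hiN ((hlearn i _ hiL2).mp hc)

include hvals hstream hCfg

theorem input_eq : ∀ x, I x = I' x := by
  have hPP : PP hn hk hsolve hthrifty hp hp1 I = PP hn hk hsolve hthrifty hp hp1 I' := by
    rw [PP, PP, hCfg]
  have hCS := CS_eq hn hk hsolve hthrifty hp hp1 hL hpaths
  suffices h : ∀ m (x : G.Var k), keyv x = m → I x = I' x by
    exact fun x => h (keyv x) x rfl
  intro m
  induction m using Nat.strong_induction_on with
  | _ m ih =>
    intro x hm
    subst hm
    -- values agree strictly below the height of x's node
    have hbelow : ∀ c : Fin G.n, htn G c < htn G (nodeOf x) → G.val I c = G.val I' c := by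
      intro c hc
      refine val_congr c (fun y hy => ?_)
      have hy2 : htn G (nodeOf y) ≤ htn G c := htn_le_of_rtg hy
      exact ih (keyv y) (keyv_lt (by omega)) y rfl
    have hcveq : ∀ v : Fin G.n, htn G v ≤ htn G (nodeOf x) → cvar I v = cvar I' v := by
      intro v hv
      refine cvar_congr (fun y hy => ?_)
      have hy2 : htn G (nodeOf y) < htn G v := htn_lt_of_transGen hy
      exact ih (keyv y) (keyv_lt (by omega)) y rfl
    have hcritiff : ∀ y : G.Var k, keyv y ≤ keyv x →
        (isCrit hn hk hsolve hthrifty hp hp1 I y ↔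
          isCrit hn hk hsolve hthrifty hp hp1 I' y) := by
      intro y hy
      have hht := keyv_ht_le hy
      rw [isCrit, isCrit, ← hPP]
      constructor
      · rintro ⟨v, hv, he⟩
        refine ⟨v, hv, ?_⟩
        have hnv : nodeOf y = v := by rw [he, nodeOf_cvar]
        rw [he, hcveq v (by rw [← hnv]; omega)]
      · rintro ⟨v, hv, he⟩
        refine ⟨v, hv, ?_⟩
        have hnv : nodeOf y = v := by rw [he, nodeOf_cvar]
        rw [he, hcveq v (by rw [← hnv]; omega)]
    by_cases hcx : isCrit hn hk hsolve hthrifty hp hp1 I x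
    · -- critical variable
      obtain ⟨v, hv, he⟩ := hcx
      have hnv : nodeOf x = v := by rw [he, nodeOf_cvar]
      have hcv : cvar I v = cvar I' v := hcveq v (by rw [← hnv])
      have hvv : G.val I v = G.val I' v :=
        cfgval_tr hn hk hsolve hthrifty hp hp1 hL hpaths
          (PP_subset hn hk hsolve hthrifty hp hp1 I hv)
      have hA : I x = G.val I v := by rw [he]; exact I_cvar I v
      have hB : I' x = G.val I' v := by rw [he, hcv]; exact I_cvar I' v
      rw [hA, hB]
      exact hvv
    · by_cases hqx : isQaft hn hk hsolve hthrifty hp hp1 I x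
      · obtain ⟨j, hj, he⟩ := hqx
        have e1 : x = cvar I (nodeAt hn hk hsolve hthrifty hp hp1 I j) := by
          rw [← he]
          exact label_cvar hn hk hsolve hthrifty hp hp1 hj
        have e2 : x = cvar I' (nodeAt hn hk hsolve hthrifty hp hp1 I' j) := by
          rw [← he, hlabels_tr hn hk hsolve hthrifty hp hp1 hL hpaths j hj]
          exact label_cvar hn hk hsolve hthrifty hp hp1 (I := I') (by omega)
        have h1 : I x = G.val I (nodeAt hn hk hsolve hthrifty hp hp1 I j) := by
          conv_lhs => rw [e1]
          exact I_cvar I _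
        have h2 : I' x = G.val I' (nodeAt hn hk hsolve hthrifty hp hp1 I' j) := by
          conv_lhs => rw [e2]
          exact I_cvar I' _
        rw [h1, h2]
        exact hvals j hj
      · -- else variable: read off the stream
        have hex : isElse hn hk hsolve hthrifty hp hp1 I x := ⟨hcx, hqx⟩
        have hex' : isElse hn hk hsolve hthrifty hp hp1 I' x :=
          ⟨fun hc => hcx ((hcritiff x le_rfl).mpr hc),
           fun hq => hqx ((isQaft_tr hn hk hsolve hthrifty hp hp1 hL hpaths x).mpr hq)⟩
        have hrnk : rnk hn hk hsolve hthrifty hp hp1 I x =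
            rnk hn hk hsolve hthrifty hp hp1 I' x := by
          rw [rnk, rnk]
          congr 1
          ext y
          rw [Finset.mem_filter, Finset.mem_filter]
          constructor
          · rintro ⟨hy1, hy2, hy3⟩
            refine ⟨hy1, ⟨?_, ?_⟩, hy3⟩
            · exact fun hc => hy2.1 ((hcritiff y (by omega)).mpr hc)
            · exact fun hq => hy2.2
                ((isQaft_tr hn hk hsolve hthrifty hp hp1 hL hpaths y).mpr hq)
          · rintro ⟨hy1, hy2, hy3⟩
            refine ⟨hy1, ⟨?_, ?_⟩, hy3⟩
            · exact fun hc => hy2.1 ((hcritiff y (by omega)).mp hc)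
            · exact fun hq => hy2.2
                ((isQaft_tr hn hk hsolve hthrifty hp hp1 hL hpaths y).mp hq)
        have hmcnt : mcnt hn hk hsolve hthrifty hp hp1 I =
            mcnt hn hk hsolve hthrifty hp hp1 I' := by
          rw [mcnt, mcnt, hCS]
        have hib : mcnt hn hk hsolve hthrifty hp hp1 I +
            rnk hn hk hsolve hthrifty hp hp1 I x < Fintype.card (G.Var k) - p := by
          have h1 := stream_bound hn hk hsolve hthrifty hp hp1 I
          have h2 := rnk_lt_eCnt hn hk hsolve hthrifty hp hp1 hex
          omega
        have e1 := stream_spec2 hn hk hsolve hthrifty hp hp1 hex hib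
        have hib' : mcnt hn hk hsolve hthrifty hp hp1 I' +
            rnk hn hk hsolve hthrifty hp hp1 I' x < Fintype.card (G.Var k) - p := by
          rw [← hmcnt, ← hrnk]
          exact hib
        have e2 := stream_spec2 hn hk hsolve hthrifty hp hp1 hex' hib'
        rw [← e1, ← e2, hstream]
        congr 1
        exact Fin.ext (show mcnt hn hk hsolve hthrifty hp hp1 I +
          rnk hn hk hsolve hthrifty hp hp1 I x = mcnt hn hk hsolve hthrifty hp hp1 I' +
            rnk hn hk hsolve hthrifty hp hp1 I' x by rw [hmcnt, hrnk])

end Final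
end ThriftyPf
namespace ThriftyPf
open Relation

variable {G : RootedDag} {k : ℕ} {B : BP (G.Var k) k Bool} {hkp : 0 < k}

theorem theta_inj (hn : 2 ≤ G.n) (hk : 2 ≤ k)
    (hsolve : G.SolvesDE hkp B) (hthrifty : G.Thrifty B)
    {p : ℕ} (hp : pebCost (Fin G.n) G.child G.root = p) (hp1 : 1 ≤ p) :
    Function.Injective (Theta hn hk hsolve hthrifty hp hp1) := by
  intro I I' hTh
  have hq0 : B.path I (tstar hn hk hsolve hthrifty hp hp1 I) =
      B.path I' (tstar hn hk hsolve hthrifty hp hp1 I') := congrArg Prod.fst hTh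
  have hstream : stream hn hk hsolve hthrifty hp hp1 I =
      stream hn hk hsolve hthrifty hp hp1 I' := congrArg Prod.snd hTh
  have hf := future_eq hn hk hsolve hthrifty hp hp1 (I := I) (I' := I') hq0.symm hstream
  have hf' := future_eq hn hk hsolve hthrifty hp hp1 (I := I') (I' := I) hq0 hstream.symm
  have hL : Llen hn hk hsolve hthrifty hp hp1 I = Llen hn hk hsolve hthrifty hp hp1 I' :=
    le_antisymm (hf _ le_rfl).1 (hf' _ le_rfl).1
  obtain ⟨_, hpaths, hvals⟩ := hf _ le_rfl
  have hpaths' : ∀ i, i ≤ Llen hn hk hsolve hthrifty hp hp1 I' →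
      B.path I (tstar hn hk hsolve hthrifty hp hp1 I + i) =
        B.path I' (tstar hn hk hsolve hthrifty hp hp1 I' + i) :=
    fun i hi => (hpaths i (by omega)).symm
  have hCfg : Cfg hsolve I (tstar hn hk hsolve hthrifty hp hp1 I) =
      Cfg hsolve I' (tstar hn hk hsolve hthrifty hp hp1 I') :=
    subset_antisymm (cfg_tr hn hk hsolve hthrifty hp hp1 hL hpaths)
      (cfg_tr hn hk hsolve hthrifty hp hp1 hL.symm hpaths')
  funext x
  exact input_eq hn hk hsolve hthrifty hp hp1 hL hpaths hvals hstream hCfg x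

end ThriftyPf

/-- If the connected rooted dag `G` (with at least two nodes) has black pebbling cost `p`,
then for any `k ≥ 2` every deterministic thrifty `k`-way branching program solving `DE^G_k`
has at least `k^p` states. -/
theorem stmt1 (G : RootedDag) (hn : 2 ≤ G.n) (k : ℕ) (hk : 2 ≤ k) (p : ℕ)
    (hp : pebCost (Fin G.n) G.child G.root = p)
    (B : BP (G.Var k) k Bool)
    (hsolve : G.SolvesDE (by omega) B) (hthrifty : G.Thrifty B) :
    k ^ p ≤ B.size := by
  letI : Fintype B.State := B.finState
  have hsize : B.size = Fintype.card B.State := rfl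
  rcases Nat.eq_zero_or_pos p with hp0 | hp1
  · subst hp0
    rw [pow_zero, hsize]
    exact Fintype.card_pos_iff.mpr ⟨B.start⟩
  · have hinj := ThriftyPf.theta_inj hn hk hsolve hthrifty hp hp1
    have hcard : Fintype.card (G.Var k → Fin k) ≤
        Fintype.card (B.State × (Fin (Fintype.card (G.Var k) - p) → Fin k)) :=
      Fintype.card_le_of_injective _ hinj
    rw [Fintype.card_fun, Fintype.card_prod, Fintype.card_fun, Fintype.card_fin,
      Fintype.card_fin] at hcard
    -- p ≤ number of variables
    have hpN : p ≤ Fintype.card (G.Var k) := by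
      set I0 : G.Var k → Fin k := fun _ => ⟨0, by omega⟩ with hI0
      have h1 := ThriftyPf.tstar_card hn hk hsolve hthrifty hp hp1 I0
      have h2 : (ThriftyPf.Cfg hsolve I0
          (ThriftyPf.tstar hn hk hsolve hthrifty hp hp1 I0)).card ≤
          Fintype.card (Fin G.n) := Finset.card_le_univ _
      have h3 : Fintype.card (Fin G.n) ≤ Fintype.card (G.Var k) :=
        Fintype.card_le_of_injective (fun u => ThriftyPf.cvar I0 u)
          (fun u v h => ThriftyPf.cvar_inj h)
      omega
    have hexp : k ^ (Fintype.card (G.Var k) - p) * k ^ p = k ^ Fintype.card (G.Var k) := by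
      rw [← pow_add]
      congr 1
      omega
    have hmul : k ^ (Fintype.card (G.Var k) - p) * k ^ p ≤
        k ^ (Fintype.card (G.Var k) - p) * Fintype.card B.State := by
      rw [hexp]
      calc k ^ Fintype.card (G.Var k) ≤
          Fintype.card B.State * k ^ (Fintype.card (G.Var k) - p) := hcard
        _ = k ^ (Fintype.card (G.Var k) - p) * Fintype.card B.State := Nat.mul_comm _ _
    have hk0 : 0 < k ^ (Fintype.card (G.Var k) - p) := Nat.pow_pos (by omega)
    rw [hsize]
    exact Nat.le_of_mul_le_mul_left hmul hk0
end

section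
/- Let B be a deterministic thrifty branching program solving DE^G_k for a rooted dag G. Then for every input I and every non-leaf node u of G, there is at least one state on the computation path of I that queries the thrifty u-variable of I (i.e., queries f_u(val(v_1)[I],...,val(v_d)[I]) where v_1,...,v_d are u's children); moreover, for every such state q and each child v of u, some state strictly earlier on the computation path of I queries a v-variable of I. -/
/-- State `q` queries the `u`-variable of input `I`: the leaf variable `l_u` if `u` is a leaf,
or the thrifty variable `f_u(val(v₁)[I], …)` if `u` is internal. -/
def QueriesNode (G : RootedDag) {k : ℕ} (B : BP (G.Var k) k Bool)
    (I : G.Var k → Fin k) (q : B.State) (u : Fin G.n) : Prop :=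
  (∃ h : G.IsLeaf u, B.query q = Sum.inl ⟨u, h⟩) ∨
  (∃ h : ¬ G.IsLeaf u, B.query q = Sum.inr ⟨⟨u, h⟩, fun v => G.val I v.1⟩)


open scoped Classical

namespace RootedDag

lemma val_leaf' (G : RootedDag) {k : ℕ} (I : G.Var k → Fin k) {u : Fin G.n}
    (h : G.IsLeaf u) : G.val I u = I (Sum.inl ⟨u, h⟩) := by
  conv_lhs => rw [val, WellFounded.fix_eq]
  exact dif_pos h

lemma val_node' (G : RootedDag) {k : ℕ} (I : G.Var k → Fin k) {u : Fin G.n}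
    (h : ¬ G.IsLeaf u) :
    G.val I u = I (Sum.inr ⟨⟨u, h⟩, fun v => G.val I v.1⟩) := by
  conv_lhs => rw [val, WellFounded.fix_eq]
  exact dif_neg h

lemma not_transGen_self (G : RootedDag) (x : Fin G.n) :
    ¬ Relation.TransGen G.child x x := by
  have := G.wf.transGen
  exact fun h => this.asymmetric _ _ h h

lemma reach_root (G : RootedDag) (w : Fin G.n) :
    Relation.ReflTransGen G.child w G.root := by
  haveI : IsTrans (Fin G.n) (fun a b => Relation.TransGen G.child b a) :=
    ⟨fun a b c h1 h2 => h2.trans h1⟩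
  haveI : IsIrrefl (Fin G.n) (fun a b => Relation.TransGen G.child b a) :=
    ⟨fun a h => G.not_transGen_self a h⟩
  have hwf : WellFounded (fun a b : Fin G.n => Relation.TransGen G.child b a) :=
    Finite.wellFounded_of_trans_of_irrefl _
  induction w using WellFounded.induction hwf with
  | _ w ih =>
    by_cases hw : w = G.root
    · exact hw ▸ Relation.ReflTransGen.refl
    · obtain ⟨p, hp⟩ := G.root_unique w hw
      exact Relation.ReflTransGen.head hp (ih p (Relation.TransGen.single hp))

end RootedDag

namespace BP

variable {Var Out : Type} {k : ℕ}

lemma visitsAt_mono (B : BP Var k Out) {I : Var → Fin k} {t s : ℕ}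
    (h : B.VisitsAt I t) (hs : s ≤ t) : B.VisitsAt I s :=
  fun r hr => h r (lt_of_lt_of_le hr hs)

lemma path_agree (B : BP Var k Out) (I I' : Var → Fin k) (T : ℕ)
    (h : ∀ s < T, B.VisitsAt I s → I' (B.query (B.path I s)) = I (B.query (B.path I s))) :
    ∀ t ≤ T, B.VisitsAt I t → B.path I' t = B.path I t ∧ B.VisitsAt I' t := by
  intro t
  induction t with
  | zero => exact fun _ _ => ⟨rfl, fun s hs => absurd hs (Nat.not_lt_zero s)⟩
  | succ t ih =>
    intro hle hv
    have hvt : B.VisitsAt I t := B.visitsAt_mono hv (Nat.le_succ t)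
    obtain ⟨hp, hv'⟩ := ih (Nat.le_of_succ_le hle) hvt
    have hq := h t (Nat.lt_of_succ_le hle) hvt
    refine ⟨?_, ?_⟩
    · show B.next (B.path I' t) (I' (B.query (B.path I' t))) =
        B.next (B.path I t) (I (B.query (B.path I t)))
      rw [hp, hq]
    · intro s hs
      rcases Nat.lt_succ_iff_lt_or_eq.mp hs with h1 | h1
      · exact hv' s h1
      · subst h1; rw [hp]; exact hv s (Nat.lt_succ_self s)

lemma out_unique (B : BP Var k Out) (I : Var → Fin k) {t t' : ℕ} {b b' : Out}
    (h1 : B.VisitsAt I t) (h2 : B.out (B.path I t) = some b)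
    (h3 : B.VisitsAt I t') (h4 : B.out (B.path I t') = some b') : b = b' := by
  rcases lt_trichotomy t t' with h | h | h
  · have := h3 t h; rw [h2] at this; exact absurd this (Option.some_ne_none _)
  · subst h; rw [h2] at h4; exact Option.some.inj h4
  · have := h1 t' h; rw [h4] at this; exact absurd this (Option.some_ne_none _)

end BP

/-- For a deterministic thrifty BP solving `DE^G_k`: every input `I` and non-leaf node `u`,
some state on `I`'s computation path queries the thrifty `u`-variable of `I`, and for every
such state, each child `v` of `u` has its `v`-variable queried strictly earlier on the path. -/
theorem stmt2 (G : RootedDag) (k : ℕ) (hk : 2 ≤ k)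
    (B : BP (G.Var k) k Bool)
    (hsolve : G.SolvesDE (by omega) B) (hthrifty : G.Thrifty B)
    (I : G.Var k → Fin k) (u : Fin G.n) (hu : ¬ G.IsLeaf u) :
    (∃ t, B.VisitsAt I t ∧
        B.query (B.path I t) = Sum.inr ⟨⟨u, hu⟩, fun v => G.val I v.1⟩) ∧
    (∀ t, B.VisitsAt I t →
        B.query (B.path I t) = Sum.inr ⟨⟨u, hu⟩, fun v => G.val I v.1⟩ →
        ∀ v : Fin G.n, G.child v u →
          ∃ s < t, QueriesNode G B I (B.path I s) v) := by
  classical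
  have hk0 : 0 < k := by omega
  let ν : Fin G.n → Fin k :=
    fun x => if G.val I x = (⟨0, hk0⟩ : Fin k) then ⟨1, by omega⟩ else ⟨0, hk0⟩
  have hν : ∀ x, ν x = if G.val I x = (⟨0, hk0⟩ : Fin k) then ⟨1, by omega⟩ else ⟨0, hk0⟩ :=
    fun _ => rfl
  have hν_ne : ∀ x, ν x ≠ G.val I x := by
    intro x
    rw [hν]
    by_cases h : G.val I x = (⟨0, hk0⟩ : Fin k)
    · rw [if_pos h, h]
      intro hc
      exact absurd (congrArg Fin.val hc) (by norm_num)
    · rw [if_neg h]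
      exact fun hc => h hc.symm
  constructor
  · -- existence
    by_contra hnone
    let uvar : G.Var k := Sum.inr ⟨⟨u, hu⟩, fun v => G.val I v.1⟩
    let I' : G.Var k → Fin k := fun w =>
      Sum.elim (fun l => I (Sum.inl l))
        (fun p => if Sum.inr p = uvar ∨ p.2 ≠ (fun v => G.val I v.1) then ν p.1.1
          else I (Sum.inr p)) w
    have hI'inl : ∀ l, I' (Sum.inl l) = I (Sum.inl l) := fun _ => rfl
    have hI'inr : ∀ (x : {x : Fin G.n // ¬ G.IsLeaf x}) (a : {v : Fin G.n // G.child v x.1} → Fin k),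
        I' (Sum.inr ⟨x, a⟩) =
          if (Sum.inr ⟨x, a⟩ : G.Var k) = uvar ∨ a ≠ (fun v => G.val I v.1) then ν x.1
          else I (Sum.inr ⟨x, a⟩) := fun _ _ => rfl
    have hval_u : G.val I' u = ν u := by
      rw [G.val_node' I' hu, hI'inr]
      rcases Classical.em ((fun v : {v : Fin G.n // G.child v u} => G.val I' v.1)
          = fun v => G.val I v.1) with hσ | hσ
      · rw [if_pos (Or.inl (by rw [hσ]))]
      · rw [if_pos (Or.inr hσ)]
    have hprop : ∀ (x : Fin G.n) (hx : ¬ G.IsLeaf x),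
        (∃ w : {w : Fin G.n // G.child w x}, G.val I' w.1 ≠ G.val I w.1) →
          G.val I' x = ν x := by
      rintro x hx ⟨w, hw⟩
      rw [G.val_node' I' hx, hI'inr]
      rw [if_pos (Or.inr (fun hc => hw (congrFun hc w)))]
    have hchain : ∀ w : Fin G.n, Relation.ReflTransGen G.child u w → G.val I' w = ν w := by
      intro w h
      induction h with
      | refl => exact hval_u
      | tail _ hstep ih =>
        refine hprop _ (fun hle => hle _ hstep) ⟨⟨_, hstep⟩, ?_⟩
        rw [ih]
        exact hν_ne _
    have hroot : G.val I' G.root = ν G.root := hchain G.root (G.reach_root u)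
    obtain ⟨T, hvT, houtT⟩ := hsolve I
    have hag : ∀ s < T + 1, B.VisitsAt I s →
        I' (B.query (B.path I s)) = I (B.query (B.path I s)) := by
      intro s _ hvs
      rcases hqs : B.query (B.path I s) with l | ⟨x, a⟩
      · exact hI'inl l
      · have ha : a = fun v => G.val I v.1 :=
          funext (hthrifty I (B.path I s) x a ⟨s, hvs, rfl⟩ hqs)
        have hne : ¬ ((Sum.inr ⟨x, a⟩ : G.Var k) = uvar ∨ a ≠ (fun v => G.val I v.1)) := by
          rintro (hc | hc)
          · exact hnone ⟨s, hvs, hqs.trans hc⟩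
          · exact hc ha
        rw [hI'inr x a, if_neg hne]
    obtain ⟨hpT, hvT'⟩ := B.path_agree I I' (T + 1) hag T (Nat.le_succ T) hvT
    obtain ⟨T', hvT'', houtT'⟩ := hsolve I'
    have hcmp : decide (G.val I G.root = (⟨0, by omega⟩ : Fin k))
        = decide (G.val I' G.root = (⟨0, by omega⟩ : Fin k)) :=
      B.out_unique I' hvT' (by rw [hpT]; exact houtT) hvT'' houtT'
    have hiff := decide_eq_decide.mp hcmp
    rw [hroot] at hiff
    by_cases h0 : G.val I G.root = (⟨0, hk0⟩ : Fin k)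
    · have h2 := hiff.mp h0
      have h1 : ν G.root = (⟨1, by omega⟩ : Fin k) := if_pos h0
      rw [h1] at h2
      exact absurd (congrArg Fin.val h2) (by norm_num)
    · have h1 : ν G.root = (⟨0, hk0⟩ : Fin k) := if_neg h0
      exact h0 (hiff.mpr h1)
  · -- ordering
    intro t ht hq v hv
    by_contra hnone
    let vvar : G.Var k := if h : G.IsLeaf v then Sum.inl ⟨v, h⟩
      else Sum.inr ⟨⟨v, h⟩, fun w => G.val I w.1⟩
    have hvvar : vvar = if h : G.IsLeaf v then Sum.inl ⟨v, h⟩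
      else Sum.inr ⟨⟨v, h⟩, fun w => G.val I w.1⟩ := rfl
    let I' : G.Var k → Fin k := fun w => if w = vvar then ν v else I w
    have hI'def : ∀ w, I' w = if w = vvar then ν v else I w := fun _ => rfl
    have unchanged : ∀ x, ¬ Relation.ReflTransGen G.child v x → G.val I' x = G.val I x := by
      intro x
      induction x using WellFounded.induction G.wf with
      | _ x ih =>
        intro hx
        by_cases hl : G.IsLeaf x
        · rw [G.val_leaf' I' hl, G.val_leaf' I hl, hI'def (Sum.inl ⟨x, hl⟩)]
          have hne : (Sum.inl ⟨x, hl⟩ : G.Var k) ≠ vvar := by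
            rw [hvvar]
            by_cases h : G.IsLeaf v
            · rw [dif_pos h]
              intro hc
              have : x = v := congrArg Subtype.val (Sum.inl.inj hc)
              exact hx (this ▸ Relation.ReflTransGen.refl)
            · rw [dif_neg h]
              exact fun hc => Sum.inl_ne_inr hc
          exact if_neg hne
        · rw [G.val_node' I' hl, G.val_node' I hl]
          have hch : (fun w : {w : Fin G.n // G.child w x} => G.val I' w.1)
              = fun w => G.val I w.1 := by
            funext w
            exact ih w.1 w.2 (fun hr => hx (hr.tail w.2))
          rw [hch, hI'def (Sum.inr ⟨⟨x, hl⟩, fun w => G.val I w.1⟩)]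
          have hne : (Sum.inr ⟨⟨x, hl⟩, fun w => G.val I w.1⟩ : G.Var k) ≠ vvar := by
            rw [hvvar]
            by_cases h : G.IsLeaf v
            · rw [dif_pos h]
              exact fun hc => Sum.inr_ne_inl hc
            · rw [dif_neg h]
              intro hc
              have h1 := Sum.inr.inj hc
              have h2 : (⟨x, hl⟩ : {u : Fin G.n // ¬ G.IsLeaf u}) = ⟨v, h⟩ :=
                congrArg Sigma.fst h1
              have h3 : x = v := congrArg Subtype.val h2
              exact hx (h3 ▸ Relation.ReflTransGen.refl)
          exact if_neg hne
    have hvval : G.val I' v = ν v := by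
      by_cases h : G.IsLeaf v
      · rw [G.val_leaf' I' h, hI'def (Sum.inl ⟨v, h⟩), if_pos (by rw [hvvar, dif_pos h])]
      · rw [G.val_node' I' h]
        have hch : (fun w : {w : Fin G.n // G.child w v} => G.val I' w.1)
            = fun w => G.val I w.1 := by
          funext w
          refine unchanged w.1 (fun hr => ?_)
          exact G.not_transGen_self v (Relation.TransGen.tail' hr w.2)
        rw [hch, hI'def (Sum.inr ⟨⟨v, h⟩, fun w => G.val I w.1⟩), if_pos (by rw [hvvar, dif_neg h])]
    have hag : ∀ s < t, B.VisitsAt I s →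
        I' (B.query (B.path I s)) = I (B.query (B.path I s)) := by
      intro s hs hvs
      have hne : B.query (B.path I s) ≠ vvar := by
        intro hc
        refine hnone ⟨s, hs, ?_⟩
        rw [hvvar] at hc
        by_cases h : G.IsLeaf v
        · rw [dif_pos h] at hc
          exact Or.inl ⟨h, hc⟩
        · rw [dif_neg h] at hc
          exact Or.inr ⟨h, hc⟩
      rw [hI'def, if_neg hne]
    obtain ⟨hpt, hvt'⟩ := B.path_agree I I' t hag t le_rfl ht
    have hthr := hthrifty I' (B.path I t) ⟨u, hu⟩ (fun w => G.val I w.1)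
      ⟨t, hvt', hpt⟩ hq
    have := hthr ⟨v, hv⟩
    rw [hvval] at this
    exact hν_ne v this.symm
end

section
/- In the reduction from DE^G_k to GEN(m) with m = 3kn + n + 1, for every input I of DE^G_k, the instance T^I of GEN(m) is a YES instance if and only if I is a YES instance of DE^G_k (i.e., val(root)[I] = 1). -/
/-- A rooted dag in which every internal node has an ordered pair of children (left, right).
`children u = none` means `u` is a leaf; the root is the unique node that is nobody's child. -/
structure BinDag where
  n : ℕ
  children : Fin n → Option (Fin n × Fin n)
  wf : WellFounded fun v u : Fin n => ∃ c, children u = some c ∧ (v = c.1 ∨ v = c.2)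
  root : Fin n
  root_no_parent : ∀ u c, children u = some c → c.1 ≠ root ∧ c.2 ≠ root
  root_unique : ∀ u, u ≠ root → ∃ p c, children p = some c ∧ (u = c.1 ∨ u = c.2)

namespace BinDag

/-- The child relation: `v` is a child of `u`. -/
def childRel (G : BinDag) : Fin G.n → Fin G.n → Prop :=
  fun v u => ∃ c, G.children u = some c ∧ (v = c.1 ∨ v = c.2)

/-- The `DE^G_k` variables for a binary dag: a leaf variable `l_u` for each leaf `u`, and a
variable `f_u(b₁, b₂)` for each internal node `u` and `b₁, b₂ ∈ [k]`. -/
def Var (G : BinDag) (k : ℕ) : Type :=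
  {u : Fin G.n // G.children u = none} ⊕
    (Σ _u : {u : Fin G.n // (G.children u).isSome}, Fin k × Fin k)

/-- The value of each node under input `I`: leaves take their `l` value, and an internal node
applies its function to the values of its two children. -/
noncomputable def val (G : BinDag) {k : ℕ} (I : G.Var k → Fin k) : Fin G.n → Fin k :=
  WellFounded.fix (C := fun _ => Fin k) G.wf fun u ih =>
    match h : G.children u with
    | none => I (Sum.inl ⟨u, h⟩)
    | some c => I (Sum.inr ⟨⟨u, by rw [h]; rfl⟩,
        (ih c.1 ⟨c, h, Or.inl rfl⟩, ih c.2 ⟨c, h, Or.inr rfl⟩)⟩)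

/-- `B` solves `DE^G_k` for a binary dag `G`: on every input it halts and outputs `true` iff
the value of the root is `1` (the first element of `[k]`). -/
def SolvesDE (G : BinDag) {k : ℕ} (hk : 0 < k) (B : BP (G.Var k) k Bool) : Prop :=
  ∀ I : G.Var k → Fin k, ∃ t, B.VisitsAt I t ∧
    B.out (B.path I t) = some (decide (G.val I G.root = ⟨0, hk⟩))

/-- `B` is thrifty: whenever a state querying `f_u(b₁, b₂)` is visited by input `I`, then
`(b₁, b₂)` is exactly the pair of values of the children of `u` under `I`. -/
def Thrifty (G : BinDag) {k : ℕ} (B : BP (G.Var k) k Bool) : Prop :=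
  ∀ (I : G.Var k → Fin k) (q : B.State) (u : {u : Fin G.n // (G.children u).isSome})
    (b : Fin k × Fin k), B.Visits I q → B.query q = Sum.inr ⟨u, b⟩ →
    ∀ c, G.children u.1 = some c → b.1 = G.val I c.1 ∧ b.2 = G.val I c.2

end BinDag

/-- The closure of `{1}` under the binary operation `T` on `[m]` (element `j ∈ [m]` is
represented by the index `j - 1 : Fin m`, so `1` is index `0`). -/
inductive Generated {m : ℕ} (T : Fin m → Fin m → Fin m) : Fin m → Prop
  | one (h : 0 < m) : Generated T ⟨0, h⟩
  | app {x y : Fin m} : Generated T x → Generated T y → Generated T (T x y)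

/-- `B` solves `GEN(m)`: on every instance `T : [m]×[m] → [m]` it halts and outputs `true`
iff `m` (index `m - 1`) is in the closure of `{1}` under `T`. -/
def SolvesGEN {m : ℕ} (hm : 0 < m) (B : BP (Fin m × Fin m) m Bool) : Prop :=
  ∀ T : Fin m × Fin m → Fin m, ∃ t b, B.VisitsAt T t ∧ B.out (B.path T t) = some b ∧
    (b = true ↔ Generated (fun x y => T (x, y)) ⟨m - 1, Nat.sub_lt hm one_pos⟩)

/-- `B` is semantic-incremental: for every state `q` querying variable `(x, y)` and every
input `T` whose computation path visits `q`, each of `x`, `y` is either `1` (index `0`) or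
labels an earlier edge on `T`'s computation path (edge labels are the answers to the queries). -/
def SemIncr {m : ℕ} (B : BP (Fin m × Fin m) m Bool) : Prop :=
  ∀ (T : Fin m × Fin m → Fin m) (t : ℕ), B.VisitsAt T t → B.out (B.path T t) = none →
    ∀ z ∈ ({(B.query (B.path T t)).1, (B.query (B.path T t)).2} : Set (Fin m)),
      (z : ℕ) = 0 ∨ ∃ s < t, T (B.query (B.path T s)) = z

/-- The static data of the reduction from `DE^G_k` to `GEN(m)`, `m = 3kn + n + 1`.
Element `j ∈ [m]` is represented by the index `j - 1 : Fin m` (so `1` is index `0`); node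
`u : Fin n` (i.e., node `u+1 ∈ [n]`) is the element with index `u`.  The leaves are listed in
a fixed order `w 0, …, w (l-1)`.  The elements `{n+2, …, m}` (indices `≥ n+1`) are injectively
assigned names `gN u a` ("node `u` has value `a`") and `gA u s a` ("value `a` flows along the
left (`s = false`) or right (`s = true`) in-arc of `u`"), with `gN root 1 = m` (index `m-1`). -/
structure RedSetup (G : BinDag) (k : ℕ) where
  hn : 2 ≤ G.n
  hk : 2 ≤ k
  hdisj : ∀ u c, G.children u = some c → c.1 ≠ c.2
  m : ℕ
  hm : m = 3 * k * G.n + G.n + 1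
  l : ℕ
  w : Fin l → Fin G.n
  w_leaf : ∀ t, G.children (w t) = none
  w_inj : Function.Injective w
  w_surj : ∀ u, G.children u = none → ∃ t, w t = u
  gN : Fin G.n → Fin k → Fin m
  gA : Fin G.n → Bool → Fin k → Fin m
  g_inj : Function.Injective fun x : (Fin G.n × Fin k) ⊕ (Fin G.n × Bool × Fin k) =>
    match x with
    | .inl (u, a) => gN u a
    | .inr (u, s, a) => gA u s a
  g_range_N : ∀ u a, G.n + 1 ≤ (gN u a : ℕ)
  g_range_A : ∀ u s a, G.n + 1 ≤ (gA u s a : ℕ)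
  g_root : (gN G.root ⟨0, by omega⟩ : ℕ) = m - 1

namespace RedSetup

variable {G : BinDag} {k : ℕ}

theorem m_pos (R : RedSetup G k) : 0 < R.m := R.hm ▸ Nat.succ_pos _

theorem lt_m (R : RedSetup G k) {j : ℕ} (h : j ≤ G.n + 1) : j < R.m := by
  have h1 : 2 * 2 ≤ k * G.n := Nat.mul_le_mul R.hk R.hn
  have h2 : R.m = 3 * (k * G.n) + G.n + 1 := by rw [R.hm, Nat.mul_assoc]
  omega

/-- The element with index `j` of `[m]`. -/
def el (R : RedSetup G k) (j : ℕ) (h : j < R.m) : Fin R.m := ⟨j, h⟩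

/-- The pairs `(x, y)` that are "used", i.e., appear as the left-hand side of one of the
explicit defining equations of `T^I`. -/
def Used (R : RedSetup G k) (x y : Fin R.m) : Prop :=
  ((x : ℕ) = 0 ∧ (y : ℕ) < G.n) ∨
  ((x : ℕ) = 0 ∧ (y : ℕ) = G.n) ∨
  ((x : ℕ) = 0 ∧ ∃ (t : ℕ) (ht : t + 1 < R.l) (a : Fin k),
      y = R.gN (R.w ⟨t, by omega⟩) a) ∨
  (∃ (u : Fin G.n) (c : Fin G.n × Fin G.n) (a : Fin k), G.children u = some c ∧
      (x : ℕ) = (u : ℕ) + 1 ∧ (y = R.gN c.1 a ∨ y = R.gN c.2 a)) ∨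
  (∃ (u : Fin G.n) (c : Fin G.n × Fin G.n) (b₁ b₂ : Fin k), G.children u = some c ∧
      x = R.gA u false b₁ ∧ y = R.gA u true b₂)

/-- `T` is the `GEN(m)` instance `T^I` associated to the `DE^G_k` input `I` by the reduction:
`T(1, u) = u + 1` for `u ∈ [n]`; `T(1, n+1) = gN (w 1) (l_{w 1})`;
`T(1, gN (w t) a) = gN (w (t+1)) (l_{w (t+1)})`; for internal `u` with children `(v₁, v₂)`:
`T(u + 1, gN vᵢ a) = gA u side a` and `T(gA u false b₁, gA u true b₂) = gN u (f_u(b₁, b₂))`;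
all unused variables are set to `1`. -/
def Defines (R : RedSetup G k) (I : G.Var k → Fin k) (T : Fin R.m → Fin R.m → Fin R.m) :
    Prop :=
  (∀ u : Fin G.n, T (R.el 0 R.m_pos) (R.el u (R.lt_m (by omega)))
      = R.el ((u : ℕ) + 1) (R.lt_m (by omega))) ∧
  (∀ h0 : 0 < R.l, T (R.el 0 R.m_pos) (R.el G.n (R.lt_m (by omega)))
      = R.gN (R.w ⟨0, h0⟩) (G.val I (R.w ⟨0, h0⟩))) ∧
  (∀ (t : ℕ) (ht : t + 1 < R.l) (a : Fin k),
      T (R.el 0 R.m_pos) (R.gN (R.w ⟨t, by omega⟩) a)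
        = R.gN (R.w ⟨t + 1, ht⟩) (G.val I (R.w ⟨t + 1, ht⟩))) ∧
  (∀ (u : Fin G.n) (c : Fin G.n × Fin G.n) (a : Fin k), G.children u = some c →
      T (R.el ((u : ℕ) + 1) (R.lt_m (by omega))) (R.gN c.1 a) = R.gA u false a ∧
      T (R.el ((u : ℕ) + 1) (R.lt_m (by omega))) (R.gN c.2 a) = R.gA u true a) ∧
  (∀ (u : Fin G.n) (c : Fin G.n × Fin G.n) (b₁ b₂ : Fin k) (h : G.children u = some c),
      T (R.gA u false b₁) (R.gA u true b₂)
        = R.gN u (I (Sum.inr ⟨⟨u, by rw [h]; rfl⟩, (b₁, b₂)⟩))) ∧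
  (∀ x y, ¬ R.Used x y → T x y = R.el 0 R.m_pos)

end RedSetup

theorem BinDag.val_leaf (G : BinDag) {k : ℕ} (I : G.Var k → Fin k) (u : Fin G.n)
    (h : G.children u = none) : G.val I u = I (Sum.inl ⟨u, h⟩) := by
  rw [BinDag.val, WellFounded.fix_eq]
  split
  · rfl
  · next c h' => rw [h] at h'; exact absurd h' (by simp)

theorem BinDag.val_node (G : BinDag) {k : ℕ} (I : G.Var k → Fin k) (u : Fin G.n)
    (c : Fin G.n × Fin G.n) (h : G.children u = some c) :
    G.val I u = I (Sum.inr ⟨⟨u, by rw [h]; rfl⟩, (G.val I c.1, G.val I c.2)⟩) := by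
  conv_lhs => rw [BinDag.val, WellFounded.fix_eq]
  split
  · next h' => rw [h] at h'; exact absurd h' (by simp)
  · next c' h' =>
    rw [h] at h'
    cases h'
    rfl

namespace RedSetup

variable {G : BinDag} {k : ℕ} (R : RedSetup G k)

theorem gN_inj {u u' : Fin G.n} {a a' : Fin k} (h : R.gN u a = R.gN u' a') :
    u = u' ∧ a = a' := by
  have := @R.g_inj (.inl (u, a)) (.inl (u', a')) h
  simpa using this

theorem gA_inj {u u' : Fin G.n} {s s' : Bool} {a a' : Fin k}
    (h : R.gA u s a = R.gA u' s' a') : u = u' ∧ s = s' ∧ a = a' := by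
  have := @R.g_inj (.inr (u, s, a)) (.inr (u', s', a')) h
  simpa using this

theorem gN_ne_gA {u u' : Fin G.n} {s : Bool} {a a' : Fin k} :
    R.gN u a ≠ R.gA u' s a' := by
  intro h
  have := @R.g_inj (.inl (u, a)) (.inr (u', s, a')) h
  simp at this

theorem l_pos : 0 < R.l := by
  have hne : (Set.univ : Set (Fin G.n)).Nonempty := ⟨⟨0, by have := R.hn; omega⟩, trivial⟩
  obtain ⟨u, -, hu⟩ := G.wf.has_min Set.univ hne
  have hleaf : G.children u = none := by
    cases h : G.children u with
    | none => rfl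
    | some c => exact absurd ⟨c, h, Or.inl rfl⟩ (hu c.1 trivial)
  obtain ⟨t, -⟩ := R.w_surj u hleaf
  exact lt_of_le_of_lt (Nat.zero_le _) t.2

variable (I : G.Var k → Fin k)

/-- The invariant: everything generated by `T^I` is of one of these forms. -/
def Good : Fin R.m → Prop := fun z =>
  (z : ℕ) ≤ G.n ∨ (∃ u, z = R.gN u (G.val I u)) ∨
    (∃ u c, G.children u = some c ∧
      (z = R.gA u false (G.val I c.1) ∨ z = R.gA u true (G.val I c.2)))

variable {T : Fin R.m → Fin R.m → Fin R.m}

theorem gen_good (hT : R.Defines I T) {z : Fin R.m} (hz : Generated T z) : R.Good I z := by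
  induction hz with
  | one h => exact Or.inl (by simp)
  | @app x y hx hy ihx ihy =>
    by_cases hu : R.Used x y
    · rcases hu with ⟨hx0, hyn⟩ | ⟨hx0, hyn⟩ | ⟨hx0, t, ht, a, hy'⟩ |
        ⟨u, c, a, hc, hx', hy'⟩ | ⟨u, c, b₁, b₂, hc, hx', hy'⟩
      · have hx' : x = R.el 0 R.m_pos := Fin.ext hx0
        have hy' : y = R.el ((⟨(y : ℕ), hyn⟩ : Fin G.n) : ℕ) (R.lt_m (by omega)) :=
          Fin.ext rfl
        rw [hx', hy', hT.1]
        exact Or.inl (by simp [el]; omega)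
      · have hx' : x = R.el 0 R.m_pos := Fin.ext hx0
        have hy' : y = R.el G.n (R.lt_m (by omega)) := Fin.ext hyn
        rw [hx', hy', hT.2.1 R.l_pos]
        exact Or.inr (Or.inl ⟨_, rfl⟩)
      · have hx' : x = R.el 0 R.m_pos := Fin.ext hx0
        rw [hx', hy', hT.2.2.1 t ht a]
        exact Or.inr (Or.inl ⟨_, rfl⟩)
      · have hxe : x = R.el ((u : ℕ) + 1) (R.lt_m (by omega)) := Fin.ext hx'
        rcases hy' with hy' | hy'
        · have ha : a = G.val I c.1 := by
            rcases ihy with hle | ⟨u', hu'⟩ | ⟨u', c', hc', hg | hg⟩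
            · exact absurd hle (by rw [hy']; have := R.g_range_N c.1 a; omega)
            · obtain ⟨h1, h2⟩ := R.gN_inj (hy' ▸ hu' : R.gN c.1 a = R.gN u' (G.val I u'))
              rw [h2, h1]
            · exact absurd (hy' ▸ hg) (R.gN_ne_gA)
            · exact absurd (hy' ▸ hg) (R.gN_ne_gA)
          rw [hxe, hy', (hT.2.2.2.1 u c a hc).1, ha]
          exact Or.inr (Or.inr ⟨u, c, hc, Or.inl rfl⟩)
        · have ha : a = G.val I c.2 := by
            rcases ihy with hle | ⟨u', hu'⟩ | ⟨u', c', hc', hg | hg⟩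
            · exact absurd hle (by rw [hy']; have := R.g_range_N c.2 a; omega)
            · obtain ⟨h1, h2⟩ := R.gN_inj (hy' ▸ hu' : R.gN c.2 a = R.gN u' (G.val I u'))
              rw [h2, h1]
            · exact absurd (hy' ▸ hg) (R.gN_ne_gA)
            · exact absurd (hy' ▸ hg) (R.gN_ne_gA)
          rw [hxe, hy', (hT.2.2.2.1 u c a hc).2, ha]
          exact Or.inr (Or.inr ⟨u, c, hc, Or.inr rfl⟩)
      · have hb₁ : b₁ = G.val I c.1 := by
          rcases ihx with hle | ⟨u', hu'⟩ | ⟨u', c', hc', hg | hg⟩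
          · exact absurd hle (by rw [hx']; have := R.g_range_A u false b₁; omega)
          · exact absurd (hx' ▸ hu').symm R.gN_ne_gA
          · obtain ⟨h1, -, h3⟩ := R.gA_inj (hx' ▸ hg : R.gA u false b₁ = R.gA u' false (G.val I c'.1))
            subst h1
            rw [hc] at hc'; cases hc'
            exact h3
          · obtain ⟨-, h2, -⟩ := R.gA_inj (hx' ▸ hg : R.gA u false b₁ = R.gA u' true (G.val I c'.2))
            simp at h2
        have hb₂ : b₂ = G.val I c.2 := by
          rcases ihy with hle | ⟨u', hu'⟩ | ⟨u', c', hc', hg | hg⟩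
          · exact absurd hle (by rw [hy']; have := R.g_range_A u true b₂; omega)
          · exact absurd (hy' ▸ hu').symm R.gN_ne_gA
          · obtain ⟨-, h2, -⟩ := R.gA_inj (hy' ▸ hg : R.gA u true b₂ = R.gA u' false (G.val I c'.1))
            simp at h2
          · obtain ⟨h1, -, h3⟩ := R.gA_inj (hy' ▸ hg : R.gA u true b₂ = R.gA u' true (G.val I c'.2))
            subst h1
            rw [hc] at hc'; cases hc'
            exact h3
        rw [hx', hy', hT.2.2.2.2.1 u c b₁ b₂ hc]
        refine Or.inr (Or.inl ⟨u, ?_⟩)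
        rw [BinDag.val_node G I u c hc, hb₁, hb₂]
    · rw [hT.2.2.2.2.2 x y hu]
      exact Or.inl (by simp [el])

theorem gen_le (hT : R.Defines I T) (j : ℕ) (h : j ≤ G.n) : Generated T ⟨j, R.lt_m (by omega)⟩ := by
  induction j with
  | zero => exact .one _
  | succ i ih =>
    have hi := ih (by omega)
    have this1 := Generated.app (T := T) (.one R.m_pos) hi
    have heq : T ⟨0, R.m_pos⟩ ⟨i, R.lt_m (by omega)⟩ = ⟨i + 1, R.lt_m (by omega)⟩ :=
      hT.1 ⟨i, by omega⟩
    exact heq ▸ this1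

theorem gen_leaf_chain (hT : R.Defines I T) : ∀ (t : ℕ) (ht : t < R.l),
    Generated T (R.gN (R.w ⟨t, ht⟩) (G.val I (R.w ⟨t, ht⟩))) := by
  intro t
  induction t with
  | zero =>
    intro ht
    have this1 := Generated.app (T := T) (.one R.m_pos) (R.gen_le I hT G.n le_rfl)
    have heq : T ⟨0, R.m_pos⟩ ⟨G.n, R.lt_m (by omega)⟩
        = R.gN (R.w ⟨0, ht⟩) (G.val I (R.w ⟨0, ht⟩)) := hT.2.1 ht
    exact heq ▸ this1
  | succ i ih =>
    intro ht
    have hi := ih (by omega)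
    have this1 := Generated.app (T := T) (.one R.m_pos) hi
    have heq : T ⟨0, R.m_pos⟩ (R.gN (R.w ⟨i, by omega⟩) (G.val I (R.w ⟨i, by omega⟩)))
        = R.gN (R.w ⟨i + 1, ht⟩) (G.val I (R.w ⟨i + 1, ht⟩)) :=
      hT.2.2.1 i ht (G.val I (R.w ⟨i, by omega⟩))
    exact heq ▸ this1

theorem gen_nodes (hT : R.Defines I T) (u : Fin G.n) : Generated T (R.gN u (G.val I u)) := by
  refine G.wf.induction (C := fun u => Generated T (R.gN u (G.val I u))) u ?_
  intro v ih
  cases h : G.children v with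
  | none =>
    obtain ⟨t, rfl⟩ := R.w_surj v h
    exact R.gen_leaf_chain I hT t.1 t.2
  | some c =>
    have h1 := ih c.1 ⟨c, h, Or.inl rfl⟩
    have h2 := ih c.2 ⟨c, h, Or.inr rfl⟩
    have hx := Generated.app (T := T) (R.gen_le I hT ((v : ℕ) + 1) (by omega)) h1
    have hy := Generated.app (T := T) (R.gen_le I hT ((v : ℕ) + 1) (by omega)) h2
    have e1 : T ⟨(v : ℕ) + 1, R.lt_m (by omega)⟩ (R.gN c.1 (G.val I c.1))
        = R.gA v false (G.val I c.1) := (hT.2.2.2.1 v c _ h).1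
    have e2 : T ⟨(v : ℕ) + 1, R.lt_m (by omega)⟩ (R.gN c.2 (G.val I c.2))
        = R.gA v true (G.val I c.2) := (hT.2.2.2.1 v c _ h).2
    have hx' := e1 ▸ hx
    have hy' := e2 ▸ hy
    have this1 := Generated.app hx' hy'
    have e3 := hT.2.2.2.2.1 v c (G.val I c.1) (G.val I c.2) h
    rw [e3] at this1
    rw [BinDag.val_node G I v c h]
    exact this1

end RedSetup

theorem stmt5' (G : BinDag) (k : ℕ) (R : RedSetup G k)
    (I : G.Var k → Fin k) (T : Fin R.m → Fin R.m → Fin R.m) (hT : R.Defines I T) :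
    Generated T ⟨R.m - 1, Nat.sub_lt R.m_pos one_pos⟩ ↔
      G.val I G.root = ⟨0, lt_of_lt_of_le two_pos R.hk⟩ := by
  have hkn : 2 * 2 ≤ k * G.n := Nat.mul_le_mul R.hk R.hn
  have hm2 : R.m = 3 * (k * G.n) + G.n + 1 := by rw [R.hm, Nat.mul_assoc]
  have hroot : R.gN G.root ⟨0, lt_of_lt_of_le two_pos R.hk⟩
      = ⟨R.m - 1, Nat.sub_lt R.m_pos one_pos⟩ := Fin.ext R.g_root
  constructor
  · intro hg
    have hgood := R.gen_good I hT hg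
    rcases hgood with hle | ⟨u, hu⟩ | ⟨u, c, hc, hg' | hg'⟩
    · have hle' : R.m - 1 ≤ G.n := hle
      omega
    · obtain ⟨h1, h2⟩ := R.gN_inj (hroot.trans hu)
      rw [← h1] at h2
      exact h2.symm
    · exact absurd (hroot.trans hg') R.gN_ne_gA
    · exact absurd (hroot.trans hg') R.gN_ne_gA
  · intro hv
    have := R.gen_nodes I hT G.root
    rw [hv, hroot] at this
    exact this

/-- Correctness of the reduction: for every input `I` of `DE^G_k`, the `GEN(m)` instance `T^I`
is a YES instance (element `m` is generated) iff `I` is a YES instance (`val(root)[I] = 1`). -/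
theorem stmt5 (G : BinDag) (k : ℕ) (R : RedSetup G k)
    (I : G.Var k → Fin k) (T : Fin R.m → Fin R.m → Fin R.m) (hT : R.Defines I T) :
    Generated T ⟨R.m - 1, Nat.sub_lt R.m_pos one_pos⟩ ↔
      G.val I G.root = ⟨0, by have := R.hk; omega⟩ := by
  exact stmt5' G k R I T hT
end

section
/- The complete binary tree T^h of height h (with 2^h − 1 nodes), viewed as a rooted dag with arcs from children to parents, has black pebbling cost exactly h for all h ≥ 1. -/
namespace Stmt8Aux

def pbPar (w : ℕ) : ℕ := (w - 1) / 2

def pbDesc (v w : ℕ) : Prop := ∃ j, pbPar^[j] w = v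

lemma pbPar_le (w : ℕ) : pbPar w ≤ w := by unfold pbPar; omega

lemma pbPar_left (v : ℕ) : pbPar (2*v+1) = v := by unfold pbPar; omega

lemma pbPar_right (v : ℕ) : pbPar (2*v+2) = v := by unfold pbPar; omega

lemma iter_le (j w : ℕ) : pbPar^[j] w ≤ w := by
  induction j generalizing w with
  | zero => simp
  | succ j ih =>
    rw [Function.iterate_succ_apply]
    exact le_trans (ih _) (pbPar_le w)

lemma pbDesc_le {v w : ℕ} (h : pbDesc v w) : v ≤ w := by
  obtain ⟨j, hj⟩ := h; rw [← hj]; exact iter_le j w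

lemma pbDesc_refl (v : ℕ) : pbDesc v v := ⟨0, rfl⟩

lemma pbDesc_trans {a b c : ℕ} (h1 : pbDesc a b) (h2 : pbDesc b c) : pbDesc a c := by
  obtain ⟨j1, hj1⟩ := h1; obtain ⟨j2, hj2⟩ := h2
  exact ⟨j1 + j2, by rw [Function.iterate_add_apply, hj2, hj1]⟩

lemma pbDesc_left (v : ℕ) : pbDesc v (2*v+1) :=
  ⟨1, by simp [Function.iterate_one, pbPar_left]⟩

lemma pbDesc_right (v : ℕ) : pbDesc v (2*v+2) :=
  ⟨1, by simp [Function.iterate_one, pbPar_right]⟩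

lemma pbDesc_total {a b w : ℕ} (h1 : pbDesc a w) (h2 : pbDesc b w) :
    pbDesc a b ∨ pbDesc b a := by
  obtain ⟨j1, hj1⟩ := h1; obtain ⟨j2, hj2⟩ := h2
  rcases le_total j1 j2 with hle | hle
  · exact Or.inr ⟨j2 - j1, by
      rw [← hj1, ← Function.iterate_add_apply, Nat.sub_add_cancel hle, hj2]⟩
  · exact Or.inl ⟨j1 - j2, by
      rw [← hj2, ← Function.iterate_add_apply, Nat.sub_add_cancel hle, hj1]⟩

lemma pbDesc_children_disj {v w : ℕ} (h1 : pbDesc (2*v+1) w) (h2 : pbDesc (2*v+2) w) :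
    False := by
  rcases pbDesc_total h1 h2 with h | h
  · obtain ⟨j, hj⟩ := h
    cases j with
    | zero => simp only [Function.iterate_zero_apply] at hj; omega
    | succ j =>
      rw [Function.iterate_succ_apply, pbPar_right] at hj
      have := iter_le j v; omega
  · obtain ⟨j, hj⟩ := h
    cases j with
    | zero => simp only [Function.iterate_zero_apply] at hj; omega
    | succ j =>
      rw [Function.iterate_succ_apply, pbPar_left] at hj
      have := iter_le j v; omega

/-- height of the subtree rooted at `v` in a complete tree of height `h`. -/
def Ht (h v : ℕ) : ℕ := h - Nat.log 2 (v + 1)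

lemma Ht_pos {h v N : ℕ} (hN : N = 2 ^ h - 1) (hv : v < N) : 1 ≤ Ht h v := by
  have h0 : 1 ≤ 2 ^ h := Nat.one_le_two_pow
  have h1 : v + 1 < 2 ^ h := by omega
  have := Nat.log_lt_of_lt_pow (by omega : v + 1 ≠ 0) h1
  unfold Ht; omega

lemma Ht_le {h v : ℕ} : Ht h v ≤ h := Nat.sub_le _ _

lemma log_succ_left (v : ℕ) : Nat.log 2 (2*v+1+1) = Nat.log 2 (v+1) + 1 := by
  have h : 2*v+1+1 = (v+1)*2 := by ring
  rw [h, Nat.log_mul_base (by norm_num) (by omega)]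

lemma log_succ_right (v : ℕ) : Nat.log 2 (2*v+2+1) = Nat.log 2 (v+1) + 1 := by
  apply Nat.log_eq_of_pow_le_of_lt_pow
  · have h1 := Nat.pow_log_le_self 2 (x := v+1) (by omega)
    have h2 : 2 ^ (Nat.log 2 (v+1) + 1) = 2 ^ Nat.log 2 (v+1) * 2 := pow_succ _ _
    omega
  · have h1 := Nat.lt_pow_succ_log_self (by norm_num : 1 < 2) (v+1)
    have h2 : 2 ^ (Nat.log 2 (v+1) + 1 + 1) = 2 ^ (Nat.log 2 (v+1) + 1) * 2 := pow_succ _ _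
    omega

lemma Ht_left (h v : ℕ) : Ht h (2*v+1) = Ht h v - 1 := by
  unfold Ht; rw [log_succ_left]; omega

lemma Ht_right (h v : ℕ) : Ht h (2*v+2) = Ht h v - 1 := by
  unfold Ht; rw [log_succ_right]; omega

lemma internal {h v N : ℕ} (hN : N = 2 ^ h - 1) (h2 : 2 ≤ Ht h v) : 2*v+2 < N := by
  have hh : 2 ≤ h := le_trans h2 Ht_le
  have hlog : Nat.log 2 (v+1) < h - 1 := by unfold Ht at h2; omega
  have h3 := Nat.lt_pow_of_log_lt (by norm_num : 1 < 2) hlog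
  have h4 : 2 ^ h = 2 ^ (h-1) * 2 := by
    rw [← pow_succ]; congr 1; omega
  omega

lemma leaf_no_child {h v N : ℕ} (hN : N = 2 ^ h - 1) (hh : 1 ≤ h) (hv : v < N)
    (h1 : Ht h v = 1) : N ≤ 2*v+1 := by
  have h0 : 1 ≤ 2 ^ h := Nat.one_le_two_pow
  have hlt : v + 1 < 2 ^ h := by omega
  have hub : Nat.log 2 (v+1) < h := Nat.log_lt_of_lt_pow (by omega) hlt
  have hlog : Nat.log 2 (v+1) = h - 1 := by unfold Ht at h1; omega
  have h2 := Nat.pow_log_le_self 2 (x := v+1) (by omega)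
  rw [hlog] at h2
  have h3 : 2 ^ h = 2 ^ (h-1) * 2 := by rw [← pow_succ]; congr 1; omega
  omega

open Classical in
noncomputable def subF (N : ℕ) (v : ℕ) : Finset (Fin N) :=
  Finset.univ.filter (fun w => pbDesc v w.val)

lemma mem_subF {N v : ℕ} {w : Fin N} : w ∈ subF N v ↔ pbDesc v w.val := by
  classical
  simp [subF]
lemma compSeq {α : Type} (P : Finset α → Finset α → Prop) (f1 f2 : ℕ → Finset α) (T1 T2 : ℕ)
    (h12 : f2 0 = f1 T1) (m1 : ∀ t < T1, P (f1 t) (f1 (t+1)))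
    (m2 : ∀ t < T2, P (f2 t) (f2 (t+1))) :
    ∃ f : ℕ → Finset α, f 0 = f1 0 ∧ f (T1+T2) = f2 T2 ∧ (∀ t < T1+T2, P (f t) (f (t+1))) ∧
      ∀ t ≤ T1+T2, (∃ s ≤ T1, f t = f1 s) ∨ (∃ s ≤ T2, f t = f2 s) := by
  refine ⟨fun t => if t ≤ T1 then f1 t else f2 (t - T1), by simp, ?_, ?_, ?_⟩
  · by_cases hT : T2 = 0
    · subst hT; simp [h12]
    · have h : ¬ (T1 + T2 ≤ T1) := by omega
      simp only [h, if_false]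
      congr 1; omega
  · intro t ht
    by_cases h1 : t + 1 ≤ T1
    · simp only [if_pos (show t ≤ T1 by omega), if_pos h1]
      exact m1 t (by omega)
    · by_cases h2 : t ≤ T1
      · have ht1 : t = T1 := by omega
        simp only [if_pos h2, if_neg h1]
        have he : t + 1 - T1 = 0 + 1 := by omega
        rw [he, ht1, ← h12]
        exact m2 0 (by omega)
      · simp only [if_neg h2, if_neg h1]
        have he : t + 1 - T1 = (t - T1) + 1 := by omega
        rw [he]
        exact m2 (t - T1) (by omega)
  · intro t ht
    by_cases h2 : t ≤ T1
    · exact Or.inl ⟨t, h2, by simp [if_pos h2]⟩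
    · exact Or.inr ⟨t - T1, by omega, by simp [if_neg h2]⟩

lemma upperAux (h N : ℕ) (hh : 1 ≤ h) (hN : N = 2 ^ h - 1)
    (child : Fin N → Fin N → Prop)
    (hchild : ∀ v u : Fin N, child v u ↔ ((v : ℕ) = 2 * u + 1 ∨ (v : ℕ) = 2 * u + 2)) :
    ∀ (k : ℕ) (v : Fin N), Ht h v.val = k → ∀ C : Finset (Fin N),
      (∀ w ∈ C, ¬ pbDesc v.val w.val) →
    ∃ (f : ℕ → Finset (Fin N)) (T : ℕ), f 0 = C ∧ f T = insert v C ∧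
      (∀ t < T, PebMove child (f t) (f (t+1))) ∧ (∀ t ≤ T, (f t).card ≤ C.card + k) := by
  intro k
  induction k using Nat.strong_induction_on with
  | _ k IH =>
    intro v hk C hC
    have hvC : v ∉ C := fun hv => hC v hv (pbDesc_refl _)
    have hk1 : 1 ≤ k := hk ▸ Ht_pos hN v.isLt
    by_cases hk2 : k = 1
    · -- leaf case
      refine ⟨fun t => if t = 0 then C else insert v C, 1, by simp, by simp, ?_, ?_⟩
      · intro t ht
        have ht0 : t = 0 := by omega
        subst ht0
        left
        refine ⟨v, ∅, ?_, by simp, by simp⟩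
        intro w hw
        rw [hchild] at hw
        have hle : N ≤ 2 * v.val + 1 := leaf_no_child hN hh v.isLt (hk2 ▸ hk)
        have := w.isLt
        omega
      · intro t _
        by_cases h0 : t = 0
        · simp [h0]
        · simp only [h0, if_false]
          have := Finset.card_insert_le v C
          omega
    · -- internal case
      have hk2' : 2 ≤ k := by omega
      have hint : 2 * v.val + 2 < N := internal hN (hk ▸ hk2')
      set c1 : Fin N := ⟨2 * v.val + 1, by omega⟩ with hc1
      set c2 : Fin N := ⟨2 * v.val + 2, by omega⟩ with hc2
      have hd1 : pbDesc v.val c1.val := pbDesc_left v.val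
      have hd2 : pbDesc v.val c2.val := pbDesc_right v.val
      have hHt1 : Ht h c1.val = k - 1 := by
        show Ht h (2 * v.val + 1) = k - 1
        rw [Ht_left, hk]
      have hHt2 : Ht h c2.val = k - 1 := by
        show Ht h (2 * v.val + 2) = k - 1
        rw [Ht_right, hk]
      have hc1C : c1 ∉ C := fun hmem => hC c1 hmem hd1
      have hc2C : c2 ∉ C := fun hmem => hC c2 hmem hd2
      have hne12 : c1 ≠ c2 := by
        intro he
        have : (c1 : ℕ) = (c2 : ℕ) := by rw [he]
        simp only [hc1, hc2] at this
        omega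
      obtain ⟨g1, T1, hg10, hg1T, hg1m, hg1c⟩ :=
        IH (k-1) (by omega) c1 hHt1 C (fun w hw hd => hC w hw (pbDesc_trans hd1 hd))
      have hC1 : ∀ w ∈ insert c1 C, ¬ pbDesc c2.val w.val := by
        intro w hw hd
        rcases Finset.mem_insert.mp hw with rfl | hw
        · exact pbDesc_children_disj (pbDesc_refl _) hd
        · exact hC w hw (pbDesc_trans hd2 hd)
      obtain ⟨g2, T2, hg20, hg2T, hg2m, hg2c⟩ :=
        IH (k-1) (by omega) c2 hHt2 (insert c1 C) hC1
      have hcardC1 : (insert c1 C).card = C.card + 1 := Finset.card_insert_of_notMem hc1C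
      set D : Finset (Fin N) := insert c2 (insert c1 C) with hD
      have hcardD : D.card = C.card + 2 := by
        rw [hD, Finset.card_insert_of_notMem, hcardC1]
        intro hmem
        rcases Finset.mem_insert.mp hmem with he | hmem
        · exact hne12 he.symm
        · exact hc2C hmem
      -- final step: place v removing both children
      have hsd : D \ {c1, c2} = C := by
        ext x
        simp only [Finset.mem_sdiff, hD, Finset.mem_insert, Finset.mem_singleton]
        constructor
        · rintro ⟨h1 | h1 | h1, h2⟩ <;> tauto
        · intro hx
          refine ⟨Or.inr (Or.inr hx), ?_⟩
          rintro (rfl | rfl)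
          · exact hc1C hx
          · exact hc2C hx
      have hmv : PebMove child D (insert v C) := by
        left
        refine ⟨v, {c1, c2}, ?_, ?_, by rw [hsd]⟩
        · intro w hw
          rw [hchild] at hw
          have : w = c1 ∨ w = c2 := by
            rcases hw with hw | hw
            · left; apply Fin.ext; simpa [hc1] using hw
            · right; apply Fin.ext; simpa [hc2] using hw
          rcases this with rfl | rfl
          · exact Finset.mem_insert_of_mem (Finset.mem_insert_self _ _)
          · exact Finset.mem_insert_self _ _
        · intro w hw
          rw [hchild]
          rcases Finset.mem_insert.mp hw with rfl | hw
          · left; rfl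
          · rw [Finset.mem_singleton] at hw
            subst hw
            right; rfl
      -- compose g1 and g2
      obtain ⟨g3, hg30, hg3T, hg3m, hg3mem⟩ :=
        compSeq (PebMove child) g1 g2 T1 T2 (by rw [hg20, hg1T]) hg1m hg2m
      -- compose g3 with the final single step
      have hlast : (fun t => if t = 0 then D else insert v C) 0 = g3 (T1 + T2) := by
        simp [hg3T, hg2T, hg20, hg1T, hD]
      obtain ⟨f, hf0, hfT, hfm, hfmem⟩ :=
        compSeq (PebMove child) g3 (fun t => if t = 0 then D else insert v C) (T1+T2) 1
          hlast hg3m (by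
            intro t ht
            have ht0 : t = 0 := by omega
            subst ht0
            simpa using hmv)
      refine ⟨f, T1 + T2 + 1, by rw [hf0, hg30, hg10], by simpa using hfT, hfm, ?_⟩
      intro t ht
      rcases hfmem t ht with ⟨s, hs, he⟩ | ⟨s, hs, he⟩
      · rcases hg3mem s hs with ⟨s', hs', he'⟩ | ⟨s', hs', he'⟩
        · have := hg1c s' hs'
          rw [he, he']
          omega
        · have := hg2c s' hs'
          rw [he, he', hcardC1] at *
          omega
      · by_cases hs0 : s = 0
        · have hD' : f t = D := by rw [he]; simp [hs0]
          rw [hD', hcardD]; omega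
        · have hD' : f t = insert v C := by rw [he]; simp [hs0]
          rw [hD']
          have := Finset.card_insert_le v C
          omega

lemma lowerAux (h N : ℕ) (hN : N = 2 ^ h - 1)
    (child : Fin N → Fin N → Prop)
    (hchild : ∀ v u : Fin N, child v u ↔ ((v : ℕ) = 2 * u + 1 ∨ (v : ℕ) = 2 * u + 2)) :
    ∀ (k : ℕ) (v : Fin N), Ht h v.val = k →
    ∀ (f : ℕ → Finset (Fin N)) (a b : ℕ), a ≤ b →
    (∀ t, a ≤ t → t < b → PebMove child (f t) (f (t+1)) ∨ f (t+1) = f t) →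
    f a ∩ subF N v.val = ∅ → v ∈ f b →
    ∃ τ, a ≤ τ ∧ τ ≤ b ∧ k ≤ (f τ ∩ subF N v.val).card := by
  classical
  intro k
  induction k using Nat.strong_induction_on with
  | _ k IH =>
    intro v hk f a b hab hmoves hempty hvb
    rcases Nat.lt_or_ge k 2 with hk2 | hk2
    · -- k ≤ 1 : take τ = b
      refine ⟨b, hab, le_refl b, ?_⟩
      have hcard : 1 ≤ (f b ∩ subF N v.val).card := by
        apply Finset.card_pos.mpr
        exact ⟨v, Finset.mem_inter.mpr ⟨hvb, mem_subF.mpr (pbDesc_refl _)⟩⟩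
      omega
    · -- main case: k ≥ 2
      have hvsub : v ∈ subF N v.val := mem_subF.mpr (pbDesc_refl _)
      have hva : v ∉ f a := by
        intro hmem
        have : v ∈ f a ∩ subF N v.val := Finset.mem_inter.mpr ⟨hmem, hvsub⟩
        rw [hempty] at this
        exact absurd this (Finset.notMem_empty v)
      -- b' : first time in [a,b] that v is pebbled
      set Sv : Set ℕ := {t | a ≤ t ∧ v ∈ f t} with hSv
      have hbS : b ∈ Sv := ⟨hab, hvb⟩
      have hbmem : sInf Sv ∈ Sv := Nat.sInf_mem ⟨b, hbS⟩
      set b' : ℕ := sInf Sv with hb'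
      have hb'le : b' ≤ b := Nat.sInf_le hbS
      have hab' : a ≤ b' := hbmem.1
      have hvb' : v ∈ f b' := hbmem.2
      have hane : a ≠ b' := by
        intro he
        exact hva (he ▸ hvb')
      have hab'' : a + 1 ≤ b' := by omega
      set t0 : ℕ := b' - 1 with ht0
      have ht0a : a ≤ t0 := by omega
      have ht0b : t0 < b := by omega
      have hvt0 : v ∉ f t0 := by
        intro hmem
        exact Nat.notMem_of_lt_sInf (show t0 < sInf Sv by omega) ⟨ht0a, hmem⟩
      have ht01 : t0 + 1 = b' := by omega
      -- the move at t0 places v, so both children are pebbled at t0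
      have hint : 2 * v.val + 2 < N := internal hN (hk ▸ hk2)
      set c1 : Fin N := ⟨2 * v.val + 1, by omega⟩ with hc1
      set c2 : Fin N := ⟨2 * v.val + 2, by omega⟩ with hc2
      have hchildren : c1 ∈ f t0 ∧ c2 ∈ f t0 := by
        rcases hmoves t0 ht0a ht0b with hmv | hmv
        · rcases hmv with ⟨u, S, hall, _, heq⟩ | ⟨u, heq⟩
          · rw [ht01] at heq
            have hu : u = v := by
              by_contra hne
              have := heq ▸ hvb'
              rcases Finset.mem_insert.mp this with he | hmem
              · exact hne he.symm
              · exact hvt0 (Finset.mem_sdiff.mp hmem).1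
            subst hu
            constructor
            · exact hall c1 ((hchild c1 u).mpr (Or.inl rfl))
            · exact hall c2 ((hchild c2 u).mpr (Or.inr rfl))
          · exfalso
            rw [ht01] at heq
            exact hvt0 (Finset.mem_of_mem_erase (heq ▸ hvb'))
        · exfalso
          rw [ht01] at hmv
          exact hvt0 (hmv ▸ hvb')
      have hd1 : pbDesc v.val c1.val := pbDesc_left v.val
      have hd2 : pbDesc v.val c2.val := pbDesc_right v.val
      have hsub1 : subF N c1.val ⊆ subF N v.val := by
        intro x hx
        exact mem_subF.mpr (pbDesc_trans hd1 (mem_subF.mp hx))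
      have hsub2 : subF N c2.val ⊆ subF N v.val := by
        intro x hx
        exact mem_subF.mpr (pbDesc_trans hd2 (mem_subF.mp hx))
      have hdisj : ∀ x : Fin N, x ∈ subF N c1.val → x ∈ subF N c2.val → False := by
        intro x hx1 hx2
        exact pbDesc_children_disj (mem_subF.mp hx1) (mem_subF.mp hx2)
      have hHt1 : Ht h c1.val = k - 1 := by
        show Ht h (2 * v.val + 1) = k - 1
        rw [Ht_left, hk]
      have hHt2 : Ht h c2.val = k - 1 := by
        show Ht h (2 * v.val + 2) = k - 1
        rw [Ht_right, hk]
      -- last empty times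
      set P1 : ℕ → Prop := fun t => a ≤ t ∧ f t ∩ subF N c1.val = ∅ with hP1
      set P2 : ℕ → Prop := fun t => a ≤ t ∧ f t ∩ subF N c2.val = ∅ with hP2
      have hPa1 : P1 a := ⟨le_refl a, by
        apply Finset.eq_empty_of_forall_notMem
        intro x hx
        rw [Finset.mem_inter] at hx
        have : x ∈ f a ∩ subF N v.val := Finset.mem_inter.mpr ⟨hx.1, hsub1 hx.2⟩
        rw [hempty] at this
        exact absurd this (Finset.notMem_empty x)⟩
      have hPa2 : P2 a := ⟨le_refl a, by
        apply Finset.eq_empty_of_forall_notMem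
        intro x hx
        rw [Finset.mem_inter] at hx
        have : x ∈ f a ∩ subF N v.val := Finset.mem_inter.mpr ⟨hx.1, hsub2 hx.2⟩
        rw [hempty] at this
        exact absurd this (Finset.notMem_empty x)⟩
      set t1 : ℕ := Nat.findGreatest P1 t0 with ht1
      set t2 : ℕ := Nat.findGreatest P2 t0 with ht2
      have hspec1 : P1 t1 := Nat.findGreatest_spec ht0a hPa1
      have hspec2 : P2 t2 := Nat.findGreatest_spec ht0a hPa2
      have hle1 : t1 ≤ t0 := Nat.findGreatest_le t0
      have hle2 : t2 ≤ t0 := Nat.findGreatest_le t0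
      have hgr1 : ∀ t, t1 < t → t ≤ t0 → f t ∩ subF N c1.val ≠ ∅ := by
        intro t hgt hle hemp
        exact Nat.findGreatest_is_greatest hgt hle ⟨by omega, hemp⟩
      have hgr2 : ∀ t, t2 < t → t ≤ t0 → f t ∩ subF N c2.val ≠ ∅ := by
        intro t hgt hle hemp
        exact Nat.findGreatest_is_greatest hgt hle ⟨by omega, hemp⟩
      -- symmetric key step
      have key : ∀ (c c' : Fin N) (s : ℕ), Ht h c.val = k - 1 → c ∈ f t0 →
          (∀ x : Fin N, x ∈ subF N c.val → x ∈ subF N c'.val → False) →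
          subF N c.val ⊆ subF N v.val → subF N c'.val ⊆ subF N v.val →
          a ≤ s → s ≤ t0 → f s ∩ subF N c.val = ∅ →
          (∀ t, s < t → t ≤ t0 → f t ∩ subF N c'.val ≠ ∅) →
          ∃ τ, a ≤ τ ∧ τ ≤ b ∧ k ≤ (f τ ∩ subF N v.val).card := by
        intro c c' s hHtc hcmem hdisj' hsubc hsubc' has hst0 hsempty hne
        obtain ⟨τ, hsτ, hτt0, hcard⟩ :=
          IH (k-1) (by omega) c hHtc f s t0 hst0
            (fun t hta htb => hmoves t (le_trans has hta) (by omega)) hsempty hcmem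
        have hτs : s < τ := by
          rcases Nat.lt_or_ge s τ with hlt | hge
          · exact hlt
          · exfalso
            have : τ = s := by omega
            rw [this, hsempty] at hcard
            simp at hcard
            omega
        obtain ⟨w, hw⟩ := Finset.nonempty_iff_ne_empty.mpr (hne τ hτs hτt0)
        rw [Finset.mem_inter] at hw
        have hwmem : w ∈ f τ ∩ subF N v.val := Finset.mem_inter.mpr ⟨hw.1, hsubc' hw.2⟩
        have hwnot : w ∉ f τ ∩ subF N c.val := by
          intro hmem
          exact hdisj' w (Finset.mem_inter.mp hmem).2 hw.2
        have hss : insert w (f τ ∩ subF N c.val) ⊆ f τ ∩ subF N v.val := by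
          intro x hx
          rcases Finset.mem_insert.mp hx with rfl | hx
          · exact hwmem
          · rw [Finset.mem_inter] at hx ⊢
            exact ⟨hx.1, hsubc hx.2⟩
        have := Finset.card_le_card hss
        rw [Finset.card_insert_of_notMem hwnot] at this
        exact ⟨τ, le_trans has (le_of_lt hτs), by omega, by omega⟩
      rcases le_total t2 t1 with hwl | hwl
      · exact key c1 c2 t1 hHt1 hchildren.1 hdisj hsub1 hsub2 hspec1.1 hle1 hspec1.2
          (fun t hgt hle => hgr2 t (by omega) hle)
      · exact key c2 c1 t2 hHt2 hchildren.2 (fun x h2 h1 => hdisj x h1 h2) hsub2 hsub1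
          hspec2.1 hle2 hspec2.2 (fun t hgt hle => hgr1 t (by omega) hle)

end Stmt8Aux

/-- The complete binary tree of height `h ≥ 1`, with `2^h - 1` nodes in heap order
(node `u` has children `2u+1` and `2u+2`, the root is node `0`, arcs go from children to
parents), has black pebbling cost exactly `h`. -/
theorem stmt8 (h : ℕ) (hh : 1 ≤ h) (N : ℕ) (hN : N = 2 ^ h - 1)
    (child : Fin N → Fin N → Prop)
    (hchild : ∀ v u : Fin N, child v u ↔ ((v : ℕ) = 2 * u + 1 ∨ (v : ℕ) = 2 * u + 2))
    (root : Fin N) (hroot : (root : ℕ) = 0) :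
    pebCost (Fin N) child root = h := by
  classical
  have hroot' : Stmt8Aux.Ht h (root : ℕ) = h := by
    rw [hroot]; simp [Stmt8Aux.Ht, Nat.log_one_right]
  obtain ⟨f, T, hf0, hfT, hfm, hfc⟩ :=
    Stmt8Aux.upperAux h N hh hN child hchild h root hroot' ∅ (by simp)
  have hmemS : h ∈ {p | ∃ f T, IsCompletePebbling child root f T ∧
      ∀ t ≤ T, (f t).card ≤ p} := by
    refine ⟨f, T, ⟨hf0, ?_, fun t ht => Or.inl (hfm t ht)⟩,
      fun t ht => by simpa using hfc t ht⟩
    rw [hfT]; exact Finset.mem_insert_self _ _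
  have hub := Nat.sInf_le hmemS
  have hmem2 := Nat.sInf_mem (⟨h, hmemS⟩ : Set.Nonempty _)
  obtain ⟨g, T', ⟨hg0, hgT, hgm⟩, hgc⟩ := hmem2
  obtain ⟨τ, _, hτT, hcard⟩ :=
    Stmt8Aux.lowerAux h N hN child hchild h root hroot' g 0 T' (Nat.zero_le _)
      (fun t _ ht => hgm t ht) (by rw [hg0]; simp) hgT
  have hsub : (g τ ∩ Stmt8Aux.subF N (root : ℕ)).card ≤ (g τ).card :=
    Finset.card_le_card Finset.inter_subset_left
  have hge := hgc τ hτT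
  have hdef : pebCost (Fin N) child root = sInf {p | ∃ f T,
      IsCompletePebbling child root f T ∧ ∀ t ≤ T, (f t).card ≤ p} := rfl
  rw [hdef]
  exact le_antisymm hub (le_trans hcard (le_trans hsub hge))
end
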